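/- arXiv:2602.03861 — 6 statements merged into one kernel-verified Lean document; each statement's English description precedes it below -/
import Mathlib

section
/- If m ≥ 6 is an odd integer, then λ(K_1 ∨ (K_{1,(m−3)/2} ∪ 2K_1)) equals the largest real root of x⁴ − m·x² − (m−3)·x + (m−3) = 0, and moreover λ(K_1 ∨ (K_{1,(m−3)/2} ∪ 2K_1)) > (1 + √(4m−7))/2. -/
open Finset

/-- The spectral radius of a finite simple graph: the supremum of the real
spectrum of its adjacency matrix. -/
noncomputable def specRad {V : Type*} [Fintype V] [DecidableEq V] (G : SimpleGraph V) : ℝ :=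
  letI := Classical.decRel G.Adj
  sSup (spectrum ℝ (SimpleGraph.adjMatrix ℝ G))

/-- The fish graph `H(4,3)`: a 4-cycle 0-1-2-3-0 and a triangle 0-4-5 sharing vertex 0. -/
def H43 : SimpleGraph (Fin 6) :=
  SimpleGraph.fromEdgeSet {s(0, 1), s(1, 2), s(2, 3), s(3, 0), s(0, 4), s(4, 5), s(5, 0)}

/-- The bowtie graph `H(3,3)` (also `F₂`): two triangles 0-1-2 and 0-3-4 sharing vertex 0. -/
def H33 : SimpleGraph (Fin 5) :=
  SimpleGraph.fromEdgeSet {s(0, 1), s(1, 2), s(2, 0), s(0, 3), s(3, 4), s(4, 0)}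

/-- `G` contains a (not necessarily induced) subgraph isomorphic to `H`. -/
def HasSubgraphCopy {W V : Type*} (H : SimpleGraph W) (G : SimpleGraph V) : Prop :=
  ∃ f : W → V, Function.Injective f ∧ ∀ ⦃a b⦄, H.Adj a b → G.Adj (f a) (f b)

/-- `G` is `H`-free: it contains no subgraph isomorphic to `H`. -/
def GraphFree {W V : Type*} (H : SimpleGraph W) (G : SimpleGraph V) : Prop :=
  ¬ HasSubgraphCopy H G

/-- The book graph `K₂ ∨ k·K₁`, on vertices `Fin (k+2)`: vertices 0 and 1 form the `K₂`
and are joined to all of the `k` remaining independent vertices. -/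
def bookGraph (k : ℕ) : SimpleGraph (Fin (k + 2)) where
  Adj x y := x ≠ y ∧ (x.val < 2 ∨ y.val < 2)
  symm := ⟨fun _ _ h => ⟨h.1.symm, h.2.symm⟩⟩
  loopless := ⟨fun _ h => h.1 rfl⟩

/-- `S⁻`: the graph obtained from the book graph `K₂ ∨ k·K₁` by deleting one edge
incident to a vertex of degree two (the edge between vertices 1 and 2). -/
def bookMinus (k : ℕ) : SimpleGraph (Fin (k + 2)) where
  Adj x y := x ≠ y ∧ (x.val < 2 ∨ y.val < 2) ∧
    ¬(x.val = 1 ∧ y.val = 2) ∧ ¬(x.val = 2 ∧ y.val = 1)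
  symm := by
    constructor
    rintro x y ⟨h1, h2, h3, h4⟩
    exact ⟨h1.symm, h2.symm, fun h => h4 ⟨h.2, h.1⟩, fun h => h3 ⟨h.2, h.1⟩⟩
  loopless := ⟨fun _ h => h.1 rfl⟩

/-- The graph `K₁ ∨ (K_{1,t} ∪ 2K₁)` on `Fin (t+4)`: vertex 0 is the apex joined to all
other vertices, vertex 1 is the star center joined to the `t` leaves `4, …, t+3`,
and vertices 2, 3 are the two extra vertices (joined only to the apex). -/
def extGraph (t : ℕ) : SimpleGraph (Fin (t + 4)) where
  Adj x y := x ≠ y ∧ (x.val = 0 ∨ y.val = 0 ∨ (x.val = 1 ∧ 4 ≤ y.val) ∨ (y.val = 1 ∧ 4 ≤ x.val))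
  symm := by
    constructor
    rintro x y ⟨h1, h2⟩
    exact ⟨h1.symm, by tauto⟩
  loopless := ⟨fun _ h => h.1 rfl⟩

/-- The star `K_{1,r}` on `Fin (r+1)`, with center 0. -/
def starGraph (r : ℕ) : SimpleGraph (Fin (r + 1)) where
  Adj x y := x ≠ y ∧ (x.val = 0 ∨ y.val = 0)
  symm := ⟨fun _ _ h => ⟨h.1.symm, h.2.symm⟩⟩
  loopless := ⟨fun _ h => h.1 rfl⟩

/-- Membership in the family `𝒢(m, H(4,3))`: `H(4,3)`-free, `m` edges, no isolated vertices. -/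
def memFamily {V : Type*} [Fintype V] [DecidableEq V] (m : ℕ) (G : SimpleGraph V) : Prop :=
  GraphFree H43 G ∧ G.edgeSet.ncard = m ∧ ∀ v : V, ∃ w, G.Adj v w

/-- `e(S)`: the number of edges of `G` with both endpoints in `S`. -/
noncomputable def eIn {V : Type*} (G : SimpleGraph V) (S : Set V) : ℕ :=
  {e ∈ G.edgeSet | ∀ v ∈ e, v ∈ S}.ncard

/-- `e(S,T)`: the number of edges of `G` with one endpoint in `S` and the other in `T`. -/
noncomputable def eBetween {V : Type*} (G : SimpleGraph V) (S T : Set V) : ℕ :=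
  {e ∈ G.edgeSet | ∃ a ∈ S, ∃ b ∈ T, e = s(a, b)}.ncard

/-- `d_S(u)`: the number of neighbours of `u` inside `S`. -/
noncomputable def dIn {V : Type*} (G : SimpleGraph V) (S : Set V) (u : V) : ℕ :=
  (S ∩ G.neighborSet u).ncard

/-- `U = N(u)`. -/
def Uset {V : Type*} (G : SimpleGraph V) (u : V) : Set V := G.neighborSet u

/-- `W = V(G) \ (U ∪ {u})`. -/
def Wset {V : Type*} (G : SimpleGraph V) (u : V) : Set V :=
  Set.univ \ (G.neighborSet u ∪ {u})

/-- `U₀ = {v ∈ U : d_U(v) = 0}`. -/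
noncomputable def U0set {V : Type*} (G : SimpleGraph V) (u : V) : Set V :=
  {v ∈ G.neighborSet u | dIn G (G.neighborSet u) v = 0}

/-- `U₊ = U \ U₀`. -/
noncomputable def Uplusset {V : Type*} (G : SimpleGraph V) (u : V) : Set V :=
  {v ∈ G.neighborSet u | dIn G (G.neighborSet u) v ≠ 0}

/-- `G` attains the maximum spectral radius among all graphs in `𝒢(m, H(4,3))` other than
the book graph `K₂ ∨ ((m-1)/2)·K₁`. -/
def isExtremal {V : Type*} [Fintype V] [DecidableEq V] (m : ℕ) (G : SimpleGraph V) : Prop :=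
  memFamily m G ∧ ¬ Nonempty (G ≃g bookGraph ((m - 1) / 2)) ∧
    ∀ (n : ℕ) (H : SimpleGraph (Fin n)), memFamily m H →
      ¬ Nonempty (H ≃g bookGraph ((m - 1) / 2)) → specRad H ≤ specRad G


section Aux

open Matrix

lemma my_mem_spectrum {n : Type*} [Fintype n] [DecidableEq n] (A : Matrix n n ℝ) (μ : ℝ)
    (x : n → ℝ) (hx : x ≠ 0) (heig : A.mulVec x = μ • x) : μ ∈ spectrum ℝ A := by
  rw [spectrum.mem_iff]
  intro hunit
  rw [Matrix.isUnit_iff_isUnit_det, isUnit_iff_ne_zero] at hunit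
  apply hunit
  rw [← Matrix.exists_mulVec_eq_zero_iff]
  refine ⟨x, hx, ?_⟩
  rw [sub_mulVec, heig, Matrix.algebraMap_eq_diagonal]
  ext i
  simp [mulVec_diagonal, Pi.algebraMap_apply, Algebra.algebraMap_self_apply]

lemma my_spec_bound {n : Type*} [Fintype n] [DecidableEq n] (A : Matrix n n ℝ) (hA : A.IsSymm)
    (hnn : ∀ i j, 0 ≤ A i j) (x : n → ℝ) (hx : ∀ i, 0 < x i) (lam : ℝ)
    (heig : A.mulVec x = lam • x) (μ : ℝ) (hμ : μ ∈ spectrum ℝ A) : |μ| ≤ lam := by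
  rw [spectrum.mem_iff, Matrix.isUnit_iff_isUnit_det, isUnit_iff_ne_zero, not_not,
    ← Matrix.exists_mulVec_eq_zero_iff] at hμ
  obtain ⟨y, hy0, hy⟩ := hμ
  have heigy : A.mulVec y = μ • y := by
    rw [sub_mulVec, sub_eq_zero, Matrix.algebraMap_eq_diagonal] at hy
    rw [← hy]
    ext i
    simp [mulVec_diagonal]
  set z : n → ℝ := fun i => |y i| with hz
  have key : ∀ i, |μ| * z i ≤ A.mulVec z i := by
    intro i
    have : |μ| * z i = |(A.mulVec y) i| := by rw [heigy]; simp [abs_mul, hz]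
    rw [this, mulVec, dotProduct]
    refine (Finset.abs_sum_le_sum_abs _ _).trans ?_
    refine Finset.sum_le_sum fun j _ => ?_
    rw [abs_mul, abs_of_nonneg (hnn i j)]
  have hS : 0 < ∑ i, x i * z i := by
    have hne : ∃ i, y i ≠ 0 := by
      by_contra h
      push_neg at h
      exact hy0 (funext h)
    obtain ⟨i, hi⟩ := hne
    refine Finset.sum_pos' (fun j _ => mul_nonneg (hx j).le (abs_nonneg _)) ⟨i, mem_univ i, ?_⟩
    exact mul_pos (hx i) (abs_pos.mpr hi)
  have h1 : |μ| * ∑ i, x i * z i ≤ ∑ i, x i * (A.mulVec z) i := by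
    rw [Finset.mul_sum]
    refine Finset.sum_le_sum fun i _ => ?_
    calc |μ| * (x i * z i) = x i * (|μ| * z i) := by ring
    _ ≤ x i * (A.mulVec z) i := by
        exact mul_le_mul_of_nonneg_left (key i) (hx i).le
  have h2 : ∑ i, x i * (A.mulVec z) i = lam * ∑ i, x i * z i := by
    have : ∑ i, x i * (A.mulVec z) i = x ⬝ᵥ A.mulVec z := rfl
    rw [this, Matrix.dotProduct_mulVec, ← Matrix.mulVec_transpose, hA.eq, heig]
    simp [dotProduct, Finset.mul_sum]
    exact Finset.sum_congr rfl fun i _ => by ring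
  rw [h2] at h1
  exact le_of_mul_le_mul_right (by linarith) hS

lemma my_perron {n : Type*} [Fintype n] [DecidableEq n] [Nonempty n] (A : Matrix n n ℝ) (hA : A.IsSymm)
    (hnn : ∀ i j, 0 ≤ A i j) (x : n → ℝ) (hx : ∀ i, 0 < x i) (lam : ℝ)
    (heig : A.mulVec x = lam • x) : sSup (spectrum ℝ A) = lam := by
  have hx0 : x ≠ 0 := by
    intro h
    obtain ⟨i⟩ := ‹Nonempty n›
    exact absurd (congrFun h i) (hx i).ne'
  have hmem := my_mem_spectrum A lam x hx0 heig
  have hub : ∀ μ ∈ spectrum ℝ A, μ ≤ lam := fun μ hμ =>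
    (le_abs_self μ).trans (my_spec_bound A hA hnn x hx lam heig μ hμ)
  exact le_antisymm (csSup_le ⟨lam, hmem⟩ hub) (le_csSup ⟨lam, hub⟩ hmem)


/-- The eigenvector profile. -/
noncomputable def xf (L T : ℝ) (n : ℕ) : ℝ :=
  if n = 0 then L * (L + T) else if n = 1 then L * (L ^ 2 - T - 2)
  else if n < 4 then L + T else L ^ 2 + L - 2

lemma xf_large (L T : ℝ) {k : ℕ} (hk : 4 ≤ k) : xf L T k = L ^ 2 + L - 2 := by
  unfold xf
  rw [if_neg (by omega), if_neg (by omega), if_neg (by omega)]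

/-- adjacency condition on values -/
def Qn (v k : ℕ) : Prop :=
  v ≠ k ∧ (v = 0 ∨ k = 0 ∨ (v = 1 ∧ 4 ≤ k) ∨ (k = 1 ∧ 4 ≤ v))

instance : DecidableRel Qn := fun v k => by unfold Qn; infer_instance

lemma sum_split (t : ℕ) (g : ℕ → ℝ) (c : ℝ) (hc : ∀ k, 4 ≤ k → g k = c) :
    ∑ k ∈ Finset.range (t + 4), g k = g 0 + g 1 + g 2 + g 3 + t * c := by
  rw [Finset.range_eq_Ico, ← Finset.sum_Ico_consecutive _ (Nat.zero_le 4) (by omega : 4 ≤ t + 4)]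
  have h1 : ∑ k ∈ Finset.Ico 0 4, g k = g 0 + g 1 + g 2 + g 3 := by
    rw [← Finset.range_eq_Ico]
    simp [Finset.sum_range_succ]
  have h2 : ∑ k ∈ Finset.Ico 4 (t + 4), g k = t * c := by
    rw [Finset.sum_congr rfl (fun k hk => hc k (Finset.mem_Ico.mp hk).1), Finset.sum_const,
      Nat.card_Ico]
    simp
  rw [h1, h2]

lemma ext_adj_iff (t : ℕ) (i j : Fin (t + 4)) :
    (extGraph t).Adj i j ↔ Qn i.val j.val := by
  unfold extGraph Qn
  simp only [SimpleGraph.Adj]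
  constructor
  · rintro ⟨h1, h2⟩
    exact ⟨fun h => h1 (Fin.ext h), h2⟩
  · rintro ⟨h1, h2⟩
    exact ⟨fun h => h1 (by rw [h]), h2⟩

lemma ext_eig (t : ℕ) [DecidableRel (extGraph t).Adj] (L : ℝ)
    (hq : L ^ 4 - (2 * (t : ℝ) + 3) * L ^ 2 - 2 * (t : ℝ) * L + 2 * (t : ℝ) = 0) :
    (SimpleGraph.adjMatrix ℝ (extGraph t)).mulVec (fun i => xf L (t : ℝ) i.val)
      = L • (fun i => xf L (t : ℝ) i.val) := by
  classical
  set T : ℝ := (t : ℝ) with hT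
  funext i
  have hrow : (SimpleGraph.adjMatrix ℝ (extGraph t)).mulVec (fun i => xf L T i.val) i
      = ∑ k ∈ Finset.range (t + 4), (fun k => if Qn i.val k then xf L T k else 0) k := by
    rw [← Fin.sum_univ_eq_sum_range]
    rw [Matrix.mulVec, dotProduct]
    refine Finset.sum_congr rfl fun j _ => ?_
    rw [SimpleGraph.adjMatrix_apply, ite_mul, one_mul, zero_mul]
    exact if_congr (ext_adj_iff t i j) rfl rfl
  have hrhs : (L • (fun i => xf L T i.val)) i = L * xf L T i.val := rfl
  rw [hrow, hrhs]
  have hTnn : 0 ≤ T := by rw [hT]; positivity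
  rcases Nat.lt_or_ge i.val 4 with h4 | h4
  · have : i.val = 0 ∨ i.val = 1 ∨ i.val = 2 ∨ i.val = 3 := by omega
    rcases this with hv | hv | hv | hv <;> rw [hv]
    · rw [sum_split t _ (L ^ 2 + L - 2) (fun k hk => by
        rw [if_pos (by unfold Qn; omega), xf_large L T hk])]
      have e0 : (if Qn 0 0 then xf L T 0 else 0) = 0 := by
        rw [if_neg]; unfold Qn; omega
      have e1 : (if Qn 0 1 then xf L T 1 else 0) = L * (L ^ 2 - T - 2) := by
        rw [if_pos (by unfold Qn; omega)]; rfl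
      have e2 : (if Qn 0 2 then xf L T 2 else 0) = L + T := by
        rw [if_pos (by unfold Qn; omega)]; rfl
      have e3 : (if Qn 0 3 then xf L T 3 else 0) = L + T := by
        rw [if_pos (by unfold Qn; omega)]; rfl
      rw [e0, e1, e2, e3]
      show _ = L * (L * (L + T))
      ring
    · rw [sum_split t _ (L ^ 2 + L - 2) (fun k hk => by
        rw [if_pos (by unfold Qn; omega), xf_large L T hk])]
      have e0 : (if Qn 1 0 then xf L T 0 else 0) = L * (L + T) := by
        rw [if_pos (by unfold Qn; omega)]; rfl
      have e1 : (if Qn 1 1 then xf L T 1 else 0) = 0 := by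
        rw [if_neg]; unfold Qn; omega
      have e2 : (if Qn 1 2 then xf L T 2 else 0) = 0 := by
        rw [if_neg]; unfold Qn; omega
      have e3 : (if Qn 1 3 then xf L T 3 else 0) = 0 := by
        rw [if_neg]; unfold Qn; omega
      rw [e0, e1, e2, e3]
      show _ = L * (L * (L ^ 2 - T - 2))
      linear_combination -hq
    · rw [sum_split t _ 0 (fun k hk => by rw [if_neg]; unfold Qn; omega)]
      have e0 : (if Qn 2 0 then xf L T 0 else 0) = L * (L + T) := by
        rw [if_pos (by unfold Qn; omega)]; rfl
      have e1 : (if Qn 2 1 then xf L T 1 else 0) = 0 := by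
        rw [if_neg]; unfold Qn; omega
      have e2 : (if Qn 2 2 then xf L T 2 else 0) = 0 := by
        rw [if_neg]; unfold Qn; omega
      have e3 : (if Qn 2 3 then xf L T 3 else 0) = 0 := by
        rw [if_neg]; unfold Qn; omega
      rw [e0, e1, e2, e3]
      show _ = L * (L + T)
      ring
    · rw [sum_split t _ 0 (fun k hk => by rw [if_neg]; unfold Qn; omega)]
      have e0 : (if Qn 3 0 then xf L T 0 else 0) = L * (L + T) := by
        rw [if_pos (by unfold Qn; omega)]; rfl
      have e1 : (if Qn 3 1 then xf L T 1 else 0) = 0 := by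
        rw [if_neg]; unfold Qn; omega
      have e2 : (if Qn 3 2 then xf L T 2 else 0) = 0 := by
        rw [if_neg]; unfold Qn; omega
      have e3 : (if Qn 3 3 then xf L T 3 else 0) = 0 := by
        rw [if_neg]; unfold Qn; omega
      rw [e0, e1, e2, e3]
      show _ = L * (L + T)
      ring
  · rw [sum_split t _ 0 (fun k hk => by rw [if_neg]; unfold Qn; omega)]
    have e0 : (if Qn i.val 0 then xf L T 0 else 0) = L * (L + T) := by
      rw [if_pos (by unfold Qn; omega)]; rfl
    have e1 : (if Qn i.val 1 then xf L T 1 else 0) = L * (L ^ 2 - T - 2) := by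
      rw [if_pos (by unfold Qn; omega)]; rfl
    have e2 : (if Qn i.val 2 then xf L T 2 else 0) = 0 := by
      rw [if_neg]; unfold Qn; omega
    have e3 : (if Qn i.val 3 then xf L T 3 else 0) = 0 := by
      rw [if_neg]; unfold Qn; omega
    rw [e0, e1, e2, e3, xf_large L T h4]
    ring

end Aux

set_option maxHeartbeats 1000000 in
/-- For odd `m ≥ 6`, `λ(K₁ ∨ (K_{1,(m-3)/2} ∪ 2K₁))` is the largest real root of
`x⁴ - m·x² - (m-3)·x + (m-3) = 0`, and it exceeds `(1 + √(4m-7))/2`. -/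
theorem stmt_1 (m : ℕ) (hm : 6 ≤ m) (hodd : Odd m)
    (lam : ℝ)
    (hroot : lam ^ 4 - (m : ℝ) * lam ^ 2 - ((m : ℝ) - 3) * lam + ((m : ℝ) - 3) = 0)
    (hmaxroot : ∀ y : ℝ, y ^ 4 - (m : ℝ) * y ^ 2 - ((m : ℝ) - 3) * y + ((m : ℝ) - 3) = 0 →
      y ≤ lam) :
    specRad (extGraph ((m - 3) / 2)) = lam ∧
      (1 + Real.sqrt (4 * (m : ℝ) - 7)) / 2 < specRad (extGraph ((m - 3) / 2)) := by
  classical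
  set t := (m - 3) / 2 with ht
  have hm7 : 7 ≤ m := by
    obtain ⟨k, hk⟩ := hodd; omega
  have ht2 : (m : ℝ) = 2 * (t : ℝ) + 3 := by
    have h : 2 * t + 3 = m := by
      obtain ⟨k, hk⟩ := hodd; omega
    rw [← h]; push_cast; ring
  have hTnn : (0:ℝ) ≤ (t : ℝ) := by positivity
  -- the lower bound beta
  set s := Real.sqrt (4 * (m : ℝ) - 7) with hs
  have hs2 : s ^ 2 = 4 * (m : ℝ) - 7 := by
    rw [hs, Real.sq_sqrt]
    have : (7 : ℝ) ≤ (m : ℝ) := by exact_mod_cast hm7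
    linarith
  have hsnn : 0 ≤ s := Real.sqrt_nonneg _
  set β : ℝ := (1 + s) / 2 with hβ
  have hm7r : (7 : ℝ) ≤ (m : ℝ) := by exact_mod_cast hm7
  have hs3 : 3 < s := by nlinarith
  have hβ2 : 2 < β := by rw [hβ]; linarith
  have hβsq : β ^ 2 - β - ((m : ℝ) - 2) = 0 := by
    rw [hβ]; nlinarith [hs2]
  -- value of the quartic at β is -1
  have hPβ : β ^ 4 - (m : ℝ) * β ^ 2 - ((m : ℝ) - 3) * β + ((m : ℝ) - 3) = -1 := by
    linear_combination (β ^ 2 + β - 1) * hβsq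
  -- β < lam via IVT
  have hβlam : β < lam := by
    set f : ℝ → ℝ := fun y => y ^ 4 - (m : ℝ) * y ^ 2 - ((m : ℝ) - 3) * y + ((m : ℝ) - 3)
      with hf
    have hcont : Continuous f := by rw [hf]; fun_prop
    have hβm : β ≤ (m : ℝ) := by nlinarith [hs2, hsnn, hm7r]
    have hfm : 0 ≤ f (m : ℝ) := by
      rw [hf]
      have hinner : (0:ℝ) ≤ ((m:ℝ) - 1) * ((m:ℝ)^3 - (m:ℝ) + 3) := by
        refine mul_nonneg (by linarith) ?_
        nlinarith [hm7r, sq_nonneg ((m:ℝ))]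
      simp only
      nlinarith [hinner]
    have hfβ : f β = -1 := hPβ
    have := intermediate_value_Icc hβm hcont.continuousOn
    have h0 : (0 : ℝ) ∈ Set.Icc (f β) (f (m : ℝ)) := by
      rw [hfβ]; exact ⟨by norm_num, hfm⟩
    obtain ⟨y, hy, hfy⟩ := this h0
    have hylam : y ≤ lam := hmaxroot y hfy
    have : β ≤ lam := le_trans hy.1 hylam
    rcases lt_or_eq_of_le this with h | h
    · exact h
    · exfalso
      rw [h] at hPβ
      rw [hroot] at hPβ
      norm_num at hPβ
  have hL2 : 2 < lam := lt_trans hβ2 hβlam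
  have hLsq : (t:ℝ) + 2 < lam ^ 2 := by
    have h1 : β ^ 2 < lam ^ 2 := by nlinarith
    have h2 : β ^ 2 = β + (m : ℝ) - 2 := by linarith [hβsq]
    rw [ht2] at h2
    linarith
  -- eigenvector
  have hq : lam ^ 4 - (2 * (t:ℝ) + 3) * lam ^ 2 - 2 * (t:ℝ) * lam + 2 * (t:ℝ) = 0 := by
    linear_combination hroot + (lam ^ 2 + lam - 1) * ht2
  have hxpos : ∀ i : Fin (t + 4), 0 < xf lam (t:ℝ) i.val := by
    intro i
    unfold xf
    split_ifs with h1 h2 h3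
    · nlinarith
    · nlinarith
    · nlinarith
    · nlinarith
  have hspec : specRad (extGraph t) = lam := by
    unfold specRad
    refine my_perron _ (SimpleGraph.isSymm_adjMatrix _) ?_ (fun i => xf lam (t:ℝ) i.val)
      hxpos lam (ext_eig t lam hq)
    intro i j
    rw [SimpleGraph.adjMatrix_apply]
    split <;> norm_num
  refine ⟨hspec, ?_⟩
  rw [hspec]
  exact hβlam
end

section
/- Let G be an H(4,3)-free graph and let u be any vertex of G. If the subgraph of G induced by the neighborhood N(u) contains at least 7 edges, then every non-trivial connected component of G[N(u)] is isomorphic to a star K_{1,r} for some r ≥ 1. -/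
open Finset

lemma h43_copy {V : Type*} (G : SimpleGraph V) (u a b c x y : V)
    (hab : G.Adj a b) (hbc : G.Adj b c) (hxy : G.Adj x y)
    (hua : G.Adj u a) (huc : G.Adj u c) (hux : G.Adj u x) (huy : G.Adj u y)
    (hub : u ≠ b) (hac : a ≠ c)
    (hxa : x ≠ a) (hxb : x ≠ b) (hxc : x ≠ c)
    (hya : y ≠ a) (hyb : y ≠ b) (hyc : y ≠ c) :
    HasSubgraphCopy H43 G := by
  have n1 : u ≠ a := hua.ne
  have n2 : u ≠ c := huc.ne
  have n3 : u ≠ x := hux.ne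
  have n4 : u ≠ y := huy.ne
  have n5 : a ≠ b := hab.ne
  have n6 : b ≠ c := hbc.ne
  have n7 : x ≠ y := hxy.ne
  refine ⟨([u, a, b, c, x, y]).get, ?_, ?_⟩
  · rw [← List.nodup_iff_injective_get]
    simp only [List.nodup_cons, List.mem_cons, List.mem_singleton, List.not_mem_nil,
      List.nodup_nil, or_false, not_or]
    tauto
  · intro i j hij
    rw [H43, SimpleGraph.fromEdgeSet_adj] at hij
    simp only [Set.mem_insert_iff, Set.mem_singleton_iff, Sym2.eq_iff] at hij
    rcases hij.1 with (⟨rfl,rfl⟩|⟨rfl,rfl⟩)|(⟨rfl,rfl⟩|⟨rfl,rfl⟩)|(⟨rfl,rfl⟩|⟨rfl,rfl⟩)|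
      (⟨rfl,rfl⟩|⟨rfl,rfl⟩)|(⟨rfl,rfl⟩|⟨rfl,rfl⟩)|(⟨rfl,rfl⟩|⟨rfl,rfl⟩)|(⟨rfl,rfl⟩|⟨rfl,rfl⟩) <;>
      first
        | exact hua | exact hua.symm | exact hab | exact hab.symm
        | exact hbc | exact hbc.symm | exact huc | exact huc.symm
        | exact hux | exact hux.symm | exact hxy | exact hxy.symm
        | exact huy | exact huy.symm

lemma star_iso {W : Type*} [Fintype W] [DecidableEq W] (H : SimpleGraph W)
    (c : H.ConnectedComponent) (v0 : W) (hv0 : v0 ∈ c.supp)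
    (hadj : ∀ w ∈ c.supp, w ≠ v0 → H.Adj v0 w)
    (hind : ∀ w ∈ c.supp, ∀ w' ∈ c.supp, H.Adj w w' → w = v0 ∨ w' = v0)
    (hex : ∃ w, w ∈ c.supp ∧ w ≠ v0) :
    ∃ r : ℕ, 1 ≤ r ∧ Nonempty ((H.induce c.supp) ≃g starGraph r) := by
  classical
  haveI : Fintype ↥c.supp := Fintype.ofFinite _
  obtain ⟨w1, hw1, hw1ne⟩ := hex
  have hcard : 2 ≤ Fintype.card ↥c.supp := by
    have hne : (⟨v0, hv0⟩ : ↥c.supp) ≠ ⟨w1, hw1⟩ := by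
      intro h
      exact hw1ne (congrArg Subtype.val h).symm
    exact Fintype.one_lt_card_iff_nontrivial.mpr ⟨⟨_, _, hne⟩⟩
  refine ⟨Fintype.card ↥c.supp - 1, by omega, ?_⟩
  set r := Fintype.card ↥c.supp - 1 with hr
  have hcR : Fintype.card ↥c.supp = r + 1 := by omega
  let e0 : ↥c.supp ≃ Fin (r + 1) := Fintype.equivFinOfCardEq hcR
  let e : ↥c.supp ≃ Fin (r + 1) := e0.trans (Equiv.swap (e0 ⟨v0, hv0⟩) 0)
  have he0 : e ⟨v0, hv0⟩ = 0 := by simp [e]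
  have hiff : ∀ x : ↥c.supp, e x = 0 ↔ (x : W) = v0 := by
    intro x
    constructor
    · intro h
      have h2 : e x = e ⟨v0, hv0⟩ := by rw [h, he0]
      exact congrArg Subtype.val (e.injective h2)
    · intro h
      have : x = ⟨v0, hv0⟩ := Subtype.ext h
      rw [this, he0]
  have hval : ∀ a : Fin (r + 1), a.val = 0 ↔ a = 0 := by
    intro a; constructor
    · intro h; exact Fin.ext h
    · intro h; rw [h]; rfl
  refine ⟨⟨e, @fun x y => ?_⟩⟩
  show ((e x ≠ e y) ∧ ((e x).val = 0 ∨ (e y).val = 0)) ↔ H.Adj ↑x ↑y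
  constructor
  · rintro ⟨hne, h0⟩
    have hxy : (x : W) ≠ ↑y := by
      intro h
      exact hne (congrArg e (Subtype.ext h))
    rcases h0 with h0 | h0
    · have hx : (x : W) = v0 := (hiff x).mp ((hval _).mp h0)
      have hy : (y : W) ≠ v0 := fun h => hxy (hx.trans h.symm)
      have := hadj ↑y y.2 hy
      rwa [← hx] at this
    · have hy : (y : W) = v0 := (hiff y).mp ((hval _).mp h0)
      have hx : (x : W) ≠ v0 := fun h => hxy (h.trans hy.symm)
      have := hadj ↑x x.2 hx
      rw [← hy] at this
      exact this.symm
  · intro hA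
    have hxy : (x : W) ≠ ↑y := hA.ne
    refine ⟨fun h => hxy (congrArg Subtype.val (e.injective h)), ?_⟩
    rcases hind ↑x x.2 ↑y y.2 hA with h | h
    · left; exact (hval _).mpr ((hiff x).mpr h)
    · right; exact (hval _).mpr ((hiff y).mpr h)

lemma ncard_le_six {α : Type*} (e1 e2 e3 e4 e5 e6 : α) :
    ({e1, e2, e3, e4, e5, e6} : Set α).ncard ≤ 6 := by
  have h6 : ({e6} : Set α).ncard = 1 := Set.ncard_singleton _
  have h5 := Set.ncard_insert_le e5 ({e6} : Set α)
  have h4 := Set.ncard_insert_le e4 ({e5, e6} : Set α)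
  have h3 := Set.ncard_insert_le e3 ({e4, e5, e6} : Set α)
  have h2 := Set.ncard_insert_le e2 ({e3, e4, e5, e6} : Set α)
  have h1 := Set.ncard_insert_le e1 ({e2, e3, e4, e5, e6} : Set α)
  omega

lemma ncard_le_three {α : Type*} (e1 e2 e3 : α) :
    ({e1, e2, e3} : Set α).ncard ≤ 3 := by
  have h3 : ({e3} : Set α).ncard = 1 := Set.ncard_singleton _
  have h2 := Set.ncard_insert_le e2 ({e3} : Set α)
  have h1 := Set.ncard_insert_le e1 ({e2, e3} : Set α)
  omega

/-- If `G` is `H(4,3)`-free and `G[N(u)]` has at least 7 edges, then every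
non-trivial connected component of `G[N(u)]` is isomorphic to a star `K_{1,r}`, `r ≥ 1`. -/
theorem stmt_2 {V : Type*} [Fintype V] [DecidableEq V] (G : SimpleGraph V)
    (hfree : GraphFree H43 G) (u : V)
    (h7 : 7 ≤ (G.induce (G.neighborSet u)).edgeSet.ncard)
    (c : (G.induce (G.neighborSet u)).ConnectedComponent)
    (hc : ∃ a b, (G.induce (G.neighborSet u)).Adj a b ∧
      (G.induce (G.neighborSet u)).connectedComponentMk a = c) :
    ∃ r : ℕ, 1 ≤ r ∧
      Nonempty ((G.induce (G.neighborSet u)).induce c.supp ≃g starGraph r) := by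
  classical
  haveI : Fintype ↥(G.neighborSet u) := Fintype.ofFinite _
  have noPatW : ∀ p q r x y : ↥(G.neighborSet u),
      (G.induce (G.neighborSet u)).Adj p q → (G.induce (G.neighborSet u)).Adj q r →
      p ≠ r → (G.induce (G.neighborSet u)).Adj x y →
      x ≠ p → x ≠ q → x ≠ r → y ≠ p → y ≠ q → y ≠ r → False := by
    intro p q r x y h1 h2 h3 h4 h5 h6 h7' h8 h9 h10
    have hup : G.Adj u ↑p := p.2
    have huq : G.Adj u ↑q := q.2
    have hur : G.Adj u ↑r := r.2
    have hux : G.Adj u ↑x := x.2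
    have huy : G.Adj u ↑y := y.2
    have hpq : G.Adj ↑p ↑q := h1
    have hqr : G.Adj ↑q ↑r := h2
    have hxy : G.Adj ↑x ↑y := h4
    exact hfree (h43_copy G u ↑p ↑q ↑r ↑x ↑y hpq hqr hxy hup hur hux huy huq.ne
      (Subtype.coe_ne_coe.mpr h3)
      (Subtype.coe_ne_coe.mpr h5) (Subtype.coe_ne_coe.mpr h6) (Subtype.coe_ne_coe.mpr h7')
      (Subtype.coe_ne_coe.mpr h8) (Subtype.coe_ne_coe.mpr h9) (Subtype.coe_ne_coe.mpr h10))
  have nb : ∀ a b x y z : ↥(G.neighborSet u),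
      (G.induce (G.neighborSet u)).Adj a b → (G.induce (G.neighborSet u)).Adj x y →
      x ≠ a → x ≠ b → y ≠ a → y ≠ b → (G.induce (G.neighborSet u)).Adj a z →
      z = b ∨ z = x ∨ z = y := by
    intro a b x y z hab hxy hxa hxb hya hyb haz
    by_contra hcon
    push_neg at hcon
    exact noPatW z a b x y haz.symm hab hcon.1 hxy hcon.2.1.symm hxa hxb
      hcon.2.2.symm hya hyb
  obtain ⟨a₀, b₀, hab₀, hc₀⟩ := hc
  have hb₀c : (G.induce (G.neighborSet u)).connectedComponentMk b₀ = c :=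
    (SimpleGraph.ConnectedComponent.sound hab₀.symm.reachable).trans hc₀
  have ha₀supp : a₀ ∈ c.supp := by
    rw [SimpleGraph.ConnectedComponent.mem_supp_iff]; exact hc₀
  have hb₀supp : b₀ ∈ c.supp := by
    rw [SimpleGraph.ConnectedComponent.mem_supp_iff]; exact hb₀c
  by_cases hdisj : ∃ p q x y : ↥(G.neighborSet u),
      (G.induce (G.neighborSet u)).Adj p q ∧ (G.induce (G.neighborSet u)).Adj x y ∧
      x ≠ p ∧ x ≠ q ∧ y ≠ p ∧ y ≠ q
  · obtain ⟨a, b, x, y, hab, hxy, hxa, hxb, hya, hyb⟩ := hdisj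
    by_cases hout : ∃ z w : ↥(G.neighborSet u), (G.induce (G.neighborSet u)).Adj z w ∧
        z ≠ a ∧ z ≠ b ∧ z ≠ x ∧ z ≠ y ∧ w ≠ a ∧ w ≠ b ∧ w ≠ x ∧ w ≠ y
    · -- a matching: the component is a single edge
      obtain ⟨z, w, hzw, hza, hzb, hzx, hzy, hwa, hwb, hwx, hwy⟩ := hout
      have zdeg : ∀ t, (G.induce (G.neighborSet u)).Adj z t → t = w := by
        intro t ht
        rcases nb z w a b t hzw hab (fun h => hza h.symm) (fun h => hwa h.symm)
            (fun h => hzb h.symm) (fun h => hwb h.symm) ht with h | h | h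
        · exact h
        · exfalso
          rw [h] at ht
          rcases nb a b x y z hab hxy hxa hxb hya hyb ht.symm with h' | h' | h'
          · exact hzb h'
          · exact hzx h'
          · exact hzy h'
        · exfalso
          rw [h] at ht
          rcases nb b a x y z hab.symm hxy hxb hxa hyb hya ht.symm with h' | h' | h'
          · exact hza h'
          · exact hzx h'
          · exact hzy h'
      have wdeg : ∀ t, (G.induce (G.neighborSet u)).Adj w t → t = z := by
        intro t ht
        rcases nb w z a b t hzw.symm hab (fun h => hwa h.symm) (fun h => hza h.symm)
            (fun h => hwb h.symm) (fun h => hzb h.symm) ht with h | h | h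
        · exact h
        · exfalso
          rw [h] at ht
          rcases nb a b x y w hab hxy hxa hxb hya hyb ht.symm with h' | h' | h'
          · exact hwb h'
          · exact hwx h'
          · exact hwy h'
        · exfalso
          rw [h] at ht
          rcases nb b a x y w hab.symm hxy hxb hxa hyb hya ht.symm with h' | h' | h'
          · exact hwa h'
          · exact hwx h'
          · exact hwy h'
      have noP3 : ∀ p q r : ↥(G.neighborSet u),
          (G.induce (G.neighborSet u)).Adj q p → (G.induce (G.neighborSet u)).Adj q r →
          p ≠ r → False := by
        intro p q r hqp hqr hpr
        have hqz : q ≠ z := by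
          intro h; rw [h] at hqp hqr
          exact hpr ((zdeg p hqp).trans (zdeg r hqr).symm)
        have hqw : q ≠ w := by
          intro h; rw [h] at hqp hqr
          exact hpr ((wdeg p hqp).trans (wdeg r hqr).symm)
        have hpz : p ≠ z := by
          intro h; rw [h] at hqp
          exact hqw (zdeg q hqp.symm)
        have hpw : p ≠ w := by
          intro h; rw [h] at hqp
          exact hqz (wdeg q hqp.symm)
        have hrz : r ≠ z := by
          intro h; rw [h] at hqr
          exact hqw (zdeg q hqr.symm)
        have hrw : r ≠ w := by
          intro h; rw [h] at hqr
          exact hqz (wdeg q hqr.symm)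
        exact noPatW p q r z w hqp.symm hqr hpr hzw hpz.symm hqz.symm hrz.symm
          hpw.symm hqw.symm hrw.symm
      have deg1 : ∀ s t t' : ↥(G.neighborSet u), (G.induce (G.neighborSet u)).Adj s t →
          (G.induce (G.neighborSet u)).Adj s t' → t = t' := by
        intro s t t' h h'
        by_contra hne
        exact noP3 t s t' h h' hne
      have walk_eq : ∀ (s t : ↥(G.neighborSet u)) (p : (G.induce (G.neighborSet u)).Walk s t)
          (s' : ↥(G.neighborSet u)), (G.induce (G.neighborSet u)).Adj s s' → t = s ∨ t = s' := by
        intro s t p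
        induction p with
        | nil => intro s' _; exact Or.inl rfl
        | cons h q ih =>
          intro s' hs'
          rcases ih _ h.symm with h1 | h1
          · rw [h1]
            right
            exact deg1 _ _ _ h hs'
          · left; exact h1
      have hsupp : ∀ v ∈ c.supp, v = a₀ ∨ v = b₀ := by
        intro v hv
        rw [SimpleGraph.ConnectedComponent.mem_supp_iff] at hv
        have hr : (G.induce (G.neighborSet u)).Reachable a₀ v :=
          SimpleGraph.ConnectedComponent.exact (hc₀.trans hv.symm)
        obtain ⟨p⟩ := hr
        exact walk_eq _ _ p b₀ hab₀
      apply star_iso (G.induce (G.neighborSet u)) c a₀ ha₀supp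
      · intro w' hw' hne
        rcases hsupp w' hw' with h | h
        · exact absurd h hne
        · rw [h]; exact hab₀
      · intro w1 hw1 w2 hw2 h12
        rcases hsupp w1 hw1 with h | h
        · exact Or.inl h
        · rcases hsupp w2 hw2 with h' | h'
          · exact Or.inr h'
          · exact absurd (h.trans h'.symm) h12.ne
      · exact ⟨b₀, hb₀supp, hab₀.ne'⟩
    · -- all edges inside {a,b,x,y}: at most 6 edges, contradiction
      exfalso
      push_neg at hout
      have inS : ∀ p q : ↥(G.neighborSet u), (G.induce (G.neighborSet u)).Adj p q →
          p = a ∨ p = b ∨ p = x ∨ p = y →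
          s(p, q) ∈ ({s(a,b), s(a,x), s(a,y), s(b,x), s(b,y), s(x,y)} :
            Set (Sym2 ↥(G.neighborSet u))) := by
        intro p q hpq hp
        rcases hp with rfl | rfl | rfl | rfl
        · rcases nb p b x y q hab hxy hxa hxb hya hyb hpq with rfl | rfl | rfl <;>
            simp [Set.mem_insert_iff, Sym2.eq_iff]
        · rcases nb p a x y q hab.symm hxy hxb hxa hyb hya hpq with rfl | rfl | rfl <;>
            simp [Set.mem_insert_iff, Sym2.eq_iff]
        · rcases nb p y a b q hxy hab hxa.symm hya.symm hxb.symm hyb.symm hpq with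
            rfl | rfl | rfl <;> simp [Set.mem_insert_iff, Sym2.eq_iff]
        · rcases nb p x a b q hxy.symm hab hya.symm hxa.symm hyb.symm hxb.symm hpq with
            rfl | rfl | rfl <;> simp [Set.mem_insert_iff, Sym2.eq_iff]
      have hsub : (G.induce (G.neighborSet u)).edgeSet ⊆
          ({s(a,b), s(a,x), s(a,y), s(b,x), s(b,y), s(x,y)} :
          Set (Sym2 ↥(G.neighborSet u))) := by
        intro e he
        induction e using Sym2.ind with
        | _ p q =>
        rw [SimpleGraph.mem_edgeSet] at he
        by_cases hp : p = a ∨ p = b ∨ p = x ∨ p = y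
        · exact inS p q he hp
        · push_neg at hp
          have hq : q = a ∨ q = b ∨ q = x ∨ q = y := by
            by_cases h1 : q = a
            · exact Or.inl h1
            · by_cases h2 : q = b
              · exact Or.inr (Or.inl h2)
              · by_cases h3 : q = x
                · exact Or.inr (Or.inr (Or.inl h3))
                · exact Or.inr (Or.inr (Or.inr
                    (hout p q he hp.1 hp.2.1 hp.2.2.1 hp.2.2.2 h1 h2 h3)))
          rw [show (s(p, q) : Sym2 ↥(G.neighborSet u)) = s(q, p) from Sym2.eq_swap]
          exact inS q p he.symm hq
      have hle := Set.ncard_le_ncard hsub (Set.toFinite _)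
      have h6 := ncard_le_six (s(a,b)) (s(a,x)) (s(a,y)) (s(b,x)) (s(b,y))
        (s(x,y) : Sym2 ↥(G.neighborSet u))
      omega
  · -- all edges pairwise intersect
    push_neg at hdisj
    have hint : ∀ p q x y : ↥(G.neighborSet u), (G.induce (G.neighborSet u)).Adj p q →
        (G.induce (G.neighborSet u)).Adj x y → x = p ∨ x = q ∨ y = p ∨ y = q := by
      intro p q x y hpq hxy
      by_cases h1 : x = p
      · exact Or.inl h1
      · by_cases h2 : x = q
        · exact Or.inr (Or.inl h2)
        · by_cases h3 : y = p
          · exact Or.inr (Or.inr (Or.inl h3))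
          · exact Or.inr (Or.inr (Or.inr (hdisj p q x y hpq hxy h1 h2 h3)))
    by_cases hallA : ∀ p q : ↥(G.neighborSet u), (G.induce (G.neighborSet u)).Adj p q →
        p = a₀ ∨ q = a₀
    · apply star_iso (G.induce (G.neighborSet u)) c a₀ ha₀supp
      · intro w hw hne
        rw [SimpleGraph.ConnectedComponent.mem_supp_iff] at hw
        have hr : (G.induce (G.neighborSet u)).Reachable w a₀ :=
          SimpleGraph.ConnectedComponent.exact (hw.trans hc₀.symm)
        obtain ⟨p⟩ := hr
        cases p with
        | nil => exact absurd rfl hne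
        | cons h q =>
          rcases hallA _ _ h with h1 | h1
          · exact absurd h1 hne
          · rw [h1] at h; exact h.symm
      · intro w1 hw1 w2 hw2 h12
        exact hallA w1 w2 h12
      · exact ⟨b₀, hb₀supp, hab₀.ne'⟩
    · by_cases hallB : ∀ p q : ↥(G.neighborSet u), (G.induce (G.neighborSet u)).Adj p q →
          p = b₀ ∨ q = b₀
      · apply star_iso (G.induce (G.neighborSet u)) c b₀ hb₀supp
        · intro w hw hne
          rw [SimpleGraph.ConnectedComponent.mem_supp_iff] at hw
          have hr : (G.induce (G.neighborSet u)).Reachable w b₀ :=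
            SimpleGraph.ConnectedComponent.exact (hw.trans hb₀c.symm)
          obtain ⟨p⟩ := hr
          cases p with
          | nil => exact absurd rfl hne
          | cons h q =>
            rcases hallB _ _ h with h1 | h1
            · exact absurd h1 hne
            · rw [h1] at h; exact h.symm
        · intro w1 hw1 w2 hw2 h12
          exact hallB w1 w2 h12
        · exact ⟨a₀, ha₀supp, hab₀.ne⟩
      · -- triangle case: at most 3 edges, contradiction with 7
        exfalso
        push_neg at hallA
        push_neg at hallB
        obtain ⟨p1, q1, hpq1, hp1, hq1⟩ := hallA
        obtain ⟨p2, q2, hpq2, hp2, hq2⟩ := hallB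
        have hc1 : ∃ c1, (G.induce (G.neighborSet u)).Adj b₀ c1 ∧ c1 ≠ a₀ ∧ c1 ≠ b₀ := by
          rcases hint p1 q1 a₀ b₀ hpq1 hab₀ with h | h | h | h
          · exact absurd h.symm hp1
          · exact absurd h.symm hq1
          · exact ⟨q1, by rw [h]; exact hpq1, hq1, fun hx => hpq1.ne (h.symm.trans hx.symm)⟩
          · exact ⟨p1, by rw [h]; exact hpq1.symm, hp1, fun hx => hpq1.ne (hx.trans h)⟩
        obtain ⟨c1, hbc1, hc1a, hc1b⟩ := hc1
        have hc2 : ∃ c2, (G.induce (G.neighborSet u)).Adj a₀ c2 ∧ c2 ≠ a₀ ∧ c2 ≠ b₀ := by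
          rcases hint p2 q2 a₀ b₀ hpq2 hab₀ with h | h | h | h
          · exact ⟨q2, by rw [h]; exact hpq2, fun hx => hpq2.ne (h.symm.trans hx.symm), hq2⟩
          · exact ⟨p2, by rw [h]; exact hpq2.symm, fun hx => hpq2.ne (hx.trans h), hp2⟩
          · exact absurd h.symm hp2
          · exact absurd h.symm hq2
        obtain ⟨c2, hac2, hc2a, hc2b⟩ := hc2
        have hcc : c2 = c1 := by
          rcases hint b₀ c1 a₀ c2 hbc1 hac2 with h | h | h | h
          · exact absurd h hab₀.ne
          · exact absurd h.symm hc1a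
          · exact absurd h hc2b
          · exact h
        rw [hcc] at hac2 hc2a hc2b
        have hin : ∀ p q : ↥(G.neighborSet u), (G.induce (G.neighborSet u)).Adj p q →
            p = a₀ ∨ p = b₀ ∨ p = c1 := by
          intro p q hpq
          by_contra hp
          push_neg at hp
          have h1 : a₀ = q ∨ b₀ = q := by
            rcases hint p q a₀ b₀ hpq hab₀ with h | h | h | h
            · exact absurd h.symm hp.1
            · exact Or.inl h
            · exact absurd h.symm hp.2.1
            · exact Or.inr h
          have h2 : a₀ = q ∨ c1 = q := by
            rcases hint p q a₀ c1 hpq hac2 with h | h | h | h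
            · exact absurd h.symm hp.1
            · exact Or.inl h
            · exact absurd h.symm hp.2.2
            · exact Or.inr h
          have h3 : b₀ = q ∨ c1 = q := by
            rcases hint p q b₀ c1 hpq hbc1 with h | h | h | h
            · exact absurd h.symm hp.2.1
            · exact Or.inl h
            · exact absurd h.symm hp.2.2
            · exact Or.inr h
          rcases h2 with h2 | h2 <;> rcases h3 with h3 | h3
          · exact hab₀.ne (h2.trans h3.symm)
          · exact hc2a (h3.trans h2.symm)
          · exact hc2b (h2.trans h3.symm)
          · rcases h1 with h1 | h1
            · exact hc2a (h2.trans h1.symm)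
            · exact hc2b (h2.trans h1.symm)
        have hsub : (G.induce (G.neighborSet u)).edgeSet ⊆
            ({s(a₀,b₀), s(a₀,c1), s(b₀,c1)} : Set (Sym2 ↥(G.neighborSet u))) := by
          intro e he
          induction e using Sym2.ind with
          | _ p q =>
          rw [SimpleGraph.mem_edgeSet] at he
          rcases hin p q he with rfl | rfl | rfl <;>
            rcases hin q p he.symm with rfl | rfl | rfl <;>
            first
              | exact ((G.induce (G.neighborSet u)).irrefl he).elim
              | simp [Set.mem_insert_iff, Sym2.eq_iff]
        have hle := Set.ncard_le_ncard hsub (Set.toFinite _)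
        have h3 := ncard_le_three (s(a₀,b₀)) (s(a₀,c1))
          (s(b₀,c1) : Sym2 ↥(G.neighborSet u))
        omega
end

section
/- Let G be a connected graph with Perron vector x = (x_1,…,x_n)ᵀ, where x_i corresponds to vertex v_i. Let u, v be two distinct vertices of G and suppose {v_1,…,v_s} ⊆ N(v)∖N(u). Let G* = G − {v v_i : 1 ≤ i ≤ s} + {u v_i : 1 ≤ i ≤ s} (delete the edges v v_i and add the edges u v_i). If x_u ≥ x_v, then λ(G) < λ(G*). -/
open Finset

open Matrix
open scoped RealInnerProductSpace
set_option maxHeartbeats 1000000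



set_option maxHeartbeats 1000000

lemma rayleigh_helper {n : Type*} [Fintype n] [DecidableEq n] [Nonempty n]
    (A : Matrix n n ℝ) (hA : A.IsHermitian) :
    (∀ y : n → ℝ, ∑ i, y i ^ 2 = 1 → y ⬝ᵥ A.mulVec y ≤ sSup (spectrum ℝ A)) ∧
    (∀ y : n → ℝ, ∑ i, y i ^ 2 = 1 → y ⬝ᵥ A.mulVec y = sSup (spectrum ℝ A) →
      A.mulVec y = sSup (spectrum ℝ A) • y) := by
  classical
  set E := EuclideanSpace ℝ n
  set T : E →ₗ[ℝ] E := Matrix.toEuclideanLin A with hT_def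
  have hT : T.IsSymmetric := Matrix.isHermitian_iff_isSymmetric.mp hA
  have hre : ∀ r : ℝ, RCLike.re r = r := fun r => rfl
  haveI : Nontrivial E := by
    have : ‖EuclideanSpace.single (Classical.arbitrary n) (1:ℝ)‖ = 1 := by
      simp [EuclideanSpace.norm_single]
    refine ⟨⟨0, EuclideanSpace.single (Classical.arbitrary n) 1, fun h => ?_⟩⟩
    rw [← h] at this; simp at this
  set μ : ℝ := ⨆ x : { x : E // x ≠ 0 }, RCLike.re ⟪T ↑x, ↑x⟫ / ‖(x : E)‖ ^ 2 with hμ_def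
  have heigμ : Module.End.HasEigenvalue T μ := by
    have := hT.hasEigenvalue_iSup_of_finiteDimensional
    exact this
  -- components of T z
  have hTz : ∀ z : E, ∀ i, (T z : n → ℝ) i = (A.mulVec ((WithLp.equiv 2 (n → ℝ)) z)) i := by
    intro z i
    rw [hT_def]
    rw [show (Matrix.toEuclideanLin A z : n → ℝ) = (WithLp.equiv 2 (n → ℝ)) (Matrix.toEuclideanLin A z) from rfl]
    rfl
  have hinner : ∀ z : E, ⟪T z, z⟫ = ((WithLp.equiv 2 (n → ℝ)) z) ⬝ᵥ A.mulVec ((WithLp.equiv 2 (n → ℝ)) z) := by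
    intro z
    rw [PiLp.inner_apply, dotProduct_comm]
    unfold dotProduct
    exact Finset.sum_congr rfl fun i _ => by simp [hTz z i, RCLike.conj_to_real, mul_comm]
  have hμspec : μ ∈ spectrum ℝ A := by
    rw [← Matrix.spectrum_toEuclideanLin (A := A)]
    exact heigμ.mem_spectrum
  set T' : E →L[ℝ] E := LinearMap.toContinuousLinearMap T with hT'_def
  have hT'app : ∀ z : E, T' z = T z := fun z => rfl
  have hbdd : BddAbove (Set.range fun x : {x : E // x ≠ 0} => RCLike.re ⟪T ↑x, ↑x⟫ / ‖(x:E)‖^2) := by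
    refine ⟨‖T'‖, ?_⟩
    rintro r ⟨z, rfl⟩
    have hz : (0:ℝ) < ‖(z:E)‖ := norm_pos_iff.mpr z.prop
    have h1 : ⟪T ↑z, ↑z⟫ ≤ ‖T'‖ * ‖(z:E)‖^2 := by
      calc ⟪T ↑z, ↑z⟫ ≤ ‖T ↑z‖ * ‖(z:E)‖ := real_inner_le_norm _ _
        _ ≤ (‖T'‖ * ‖(z:E)‖) * ‖(z:E)‖ := by
            have h2 : ‖T' ↑z‖ ≤ ‖T'‖ * ‖(z:E)‖ := T'.le_opNorm _
            rw [hT'app] at h2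
            exact mul_le_mul_of_nonneg_right h2 (le_of_lt hz)
        _ = ‖T'‖ * ‖(z:E)‖^2 := by ring
    dsimp only
    rw [hre, div_le_iff₀ (by positivity)]
    simpa [mul_comm] using h1
  have hub : ∀ c ∈ spectrum ℝ A, c ≤ μ := by
    intro c hc
    rw [← Matrix.spectrum_toEuclideanLin (A := A)] at hc
    have hec : Module.End.HasEigenvalue T c := Module.End.hasEigenvalue_iff_mem_spectrum.mpr hc
    obtain ⟨w, hw⟩ := hec.exists_hasEigenvector
    have hw0 : (0:ℝ) < ‖w‖ := norm_pos_iff.mpr hw.right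
    have hcw : RCLike.re ⟪T w, w⟫ / ‖w‖^2 = c := by
      rw [hw.apply_eq_smul, hre, real_inner_smul_left, real_inner_self_eq_norm_sq]
      field_simp
    calc c = RCLike.re ⟪T w, w⟫ / ‖w‖^2 := hcw.symm
      _ ≤ μ := le_ciSup hbdd ⟨w, hw.right⟩
  have hsSup : sSup (spectrum ℝ A) = μ := IsGreatest.csSup_eq ⟨hμspec, hub⟩
  -- common setup for unit vectors
  have key : ∀ y : n → ℝ, ∑ i, y i ^ 2 = 1 →
      ∃ z : E, z ≠ 0 ∧ ‖z‖ = 1 ∧ (WithLp.equiv 2 (n → ℝ)) z = y ∧ ⟪T z, z⟫ = y ⬝ᵥ A.mulVec y := by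
    intro y hy
    set z : E := (WithLp.equiv 2 (n → ℝ)).symm y with hz_def
    have hzy : (WithLp.equiv 2 (n → ℝ)) z = y := rfl
    have hzin : ⟪z, z⟫ = 1 := by
      rw [PiLp.inner_apply]
      calc (∑ i, (starRingEnd ℝ) (z i) * z i) = ∑ i, y i ^ 2 := by
            exact Finset.sum_congr rfl fun i _ => by simp [RCLike.conj_to_real, sq]; rfl
        _ = 1 := hy
    have hn1 : ‖z‖ = 1 := by
      have h2 : ‖z‖ ^ 2 = 1 := by rw [← real_inner_self_eq_norm_sq]; exact hzin
      nlinarith [norm_nonneg z]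
    have hz0 : z ≠ 0 := by
      intro h; rw [h] at hn1; simp at hn1
    exact ⟨z, hz0, hn1, rfl, by rw [hinner z, hzy]⟩
  refine ⟨?_, ?_⟩
  · intro y hy
    obtain ⟨z, hz0, hn1, hzy, hq⟩ := key y hy
    rw [hsSup, ← hq]
    have h := le_ciSup hbdd ⟨z, hz0⟩
    simpa [hn1, hre, hμ_def] using h
  · intro y hy heq
    obtain ⟨z, hz0, hn1, hzy, hq⟩ := key y hy
    rw [hsSup] at heq
    have hmax : IsMaxOn (ContinuousLinearMap.reApplyInnerSelf T') (Metric.sphere (0:E) ‖z‖) z := by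
      intro w hw
      have hwn : ‖w‖ = ‖z‖ := by simpa using hw
      have hw0 : w ≠ 0 := by
        intro h; rw [h] at hwn; rw [← hwn] at hn1; simp at hn1
      have h1 : RCLike.re ⟪T w, w⟫ / ‖w‖^2 ≤ μ := le_ciSup hbdd ⟨w, hw0⟩
      have h2 : RCLike.re ⟪T w, w⟫ ≤ μ := by
        rwa [hwn, hn1, one_pow, div_one] at h1
      show ContinuousLinearMap.reApplyInnerSelf T' w ≤ ContinuousLinearMap.reApplyInnerSelf T' z
      unfold ContinuousLinearMap.reApplyInnerSelf
      rw [hT'app, hT'app, hre, hre, hq, heq]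
      rw [hre] at h2
      exact h2
    have hsa : IsSelfAdjoint T' := hT.isSelfAdjoint
    have hev := hsa.hasEigenvector_of_isMaxOn hz0 hmax
    have hμ' : (⨆ x : { x : E // x ≠ 0 }, ContinuousLinearMap.rayleighQuotient T' x) = μ := by
      rw [hμ_def]
      apply iSup_congr
      intro w
      unfold ContinuousLinearMap.rayleighQuotient ContinuousLinearMap.reApplyInnerSelf
      rw [hT'app]
    have happ : T z = μ • z := by
      have := hev.apply_eq_smul
      rw [hμ'] at this
      exact this
    rw [hsSup]
    funext i
    have h1 := hTz z i
    rw [happ, hzy] at h1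
    rw [← h1, ← hzy]
    rfl





lemma ind_helper (Adj A1 A2 R1 R2 : Prop) [Decidable Adj] [Decidable A1] [Decidable A2]
    [Decidable R1] [Decidable R2]
    (h1 : A1 → ¬Adj) (h2 : A2 → ¬Adj) (h3 : ¬(A1 ∧ A2)) (h4 : ¬(R1 ∧ R2))
    (h5 : R1 → Adj) (h6 : R2 → Adj)
    (h7 : A1 → ¬R1) (h8 : A1 → ¬R2) (h9 : A2 → ¬R1) (h10 : A2 → ¬R2) :
    (if ((Adj ∧ ¬(R1 ∨ R2)) ∨ (A1 ∨ A2)) then (1:ℝ) else 0)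
      = (if Adj then (1:ℝ) else 0) + ((if A1 then (1:ℝ) else 0) + (if A2 then (1:ℝ) else 0)
        - (if R1 then (1:ℝ) else 0) - (if R2 then (1:ℝ) else 0)) := by
  by_cases a1 : A1 <;> by_cases a2 : A2 <;> by_cases r1 : R1 <;> by_cases r2 : R2 <;>
    by_cases ad : Adj <;> simp_all

lemma sum_swap3 {α β γ M : Type*} [AddCommMonoid M] [Fintype α] [Fintype β] [Fintype γ]
    (f : α → β → γ → M) :
    ∑ a, ∑ b, ∑ c, f a b c = ∑ c, ∑ a, ∑ b, f a b c := by
  have h1 : ∀ a, ∑ b, ∑ c, f a b c = ∑ c, ∑ b, f a b c := fun a => Finset.sum_comm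
  simp only [h1]
  exact Finset.sum_comm

lemma sum_ind {V : Type*} [DecidableEq V] {k : ℕ} (vs : Fin k → V)
    (hinj : Function.Injective vs) (p : Prop) [Decidable p] (b : V) :
    ∑ i, (if p ∧ b = vs i then (1:ℝ) else 0) = if p ∧ ∃ i, b = vs i then 1 else 0 := by
  classical
  by_cases hp : p
  · by_cases hb : ∃ i, b = vs i
    · obtain ⟨i₀, rfl⟩ := hb
      have : ∀ j, (vs i₀ = vs j) ↔ (i₀ = j) := fun j => hinj.eq_iff
      simp only [hp, true_and]
      rw [if_pos ⟨i₀, rfl⟩]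
      rw [Finset.sum_congr rfl (fun j _ => by rw [if_congr (this j) rfl rfl])]
      simp
    · rw [if_neg (fun h => hb h.2), Finset.sum_eq_zero]
      intro i _
      rw [if_neg (fun h => hb ⟨i, h.2⟩)]
  · simp [hp]


/-- Edge-rotation lemma. If `{v₁,…,v_k} ⊆ N(v) \ N(u)` and `x_u ≥ x_v` for the
Perron vector `x` of a connected graph `G`, then the graph `G*` obtained by replacing the
edges `v vᵢ` by `u vᵢ` satisfies `λ(G) < λ(G*)`. -/
theorem stmt_3 {V : Type*} [Fintype V] [DecidableEq V] (G : SimpleGraph V)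
    [DecidableRel G.Adj] (hconn : G.Connected)
    (x : V → ℝ) (hpos : ∀ v, 0 < x v) (hunit : ∑ v : V, x v ^ 2 = 1)
    (heig : (SimpleGraph.adjMatrix ℝ G).mulVec x = specRad G • x)
    (u v : V) (huv : u ≠ v)
    (k : ℕ) (hk : 0 < k) (vs : Fin k → V) (hinj : Function.Injective vs)
    (hvs : ∀ i, vs i ∈ G.neighborSet v \ G.neighborSet u)
    (hvu : ∀ i, vs i ≠ u)
    (hx : x v ≤ x u) :
    specRad G < specRad (SimpleGraph.fromEdgeSet
      ((G.edgeSet \ {e | ∃ i, e = s(v, vs i)}) ∪ {e | ∃ i, e = s(u, vs i)})) := by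
  classical
  haveI hNe : Nonempty V := ⟨u⟩
  set S : Set (Sym2 V) := (G.edgeSet \ {e | ∃ i, e = s(v, vs i)}) ∪ {e | ∃ i, e = s(u, vs i)}
    with hS
  set H : SimpleGraph V := SimpleGraph.fromEdgeSet S with hH
  letI dH : DecidableRel H.Adj := Classical.decRel H.Adj
  set B : Matrix V V ℝ := SimpleGraph.adjMatrix ℝ H with hB
  set A : Matrix V V ℝ := SimpleGraph.adjMatrix ℝ G with hAdef
  have hspecH : specRad H = sSup (spectrum ℝ B) := rfl
  have hspecG : specRad G = sSup (spectrum ℝ A) := by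
    have h0 : specRad G
        = sSup (spectrum ℝ (letI := Classical.decRel G.Adj; SimpleGraph.adjMatrix ℝ G)) := rfl
    have hmat : (letI := Classical.decRel G.Adj; SimpleGraph.adjMatrix ℝ G) = A := by
      ext i j
      by_cases h : G.Adj i j <;> simp [h, hAdef]
    rw [h0, hmat]
  have hAdjv : ∀ i, G.Adj v (vs i) := fun i => (hvs i).1
  have hNAdju : ∀ i, ¬ G.Adj u (vs i) := fun i => (hvs i).2
  have hvsnv : ∀ i, vs i ≠ v := fun i => (hAdjv i).ne'
  have hHadj : ∀ a b, H.Adj a b ↔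
      ((G.Adj a b ∧ ¬((a = v ∧ ∃ i, b = vs i) ∨ (b = v ∧ ∃ i, a = vs i)))
        ∨ ((a = u ∧ ∃ i, b = vs i) ∨ (b = u ∧ ∃ i, a = vs i))) := by
    intro a b
    have hrem : (∃ i, s(a,b) = s(v, vs i))
        ↔ ((a = v ∧ ∃ i, b = vs i) ∨ (b = v ∧ ∃ i, a = vs i)) := by
      constructor
      · rintro ⟨i, hi⟩
        rw [Sym2.eq_iff] at hi
        rcases hi with ⟨h1, h2⟩ | ⟨h1, h2⟩
        · exact Or.inl ⟨h1, i, h2⟩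
        · exact Or.inr ⟨h2, i, h1⟩
      · rintro (⟨rfl, i, rfl⟩ | ⟨rfl, i, rfl⟩)
        · exact ⟨i, rfl⟩
        · exact ⟨i, Sym2.eq_swap⟩
    have hadd : (∃ i, s(a,b) = s(u, vs i))
        ↔ ((a = u ∧ ∃ i, b = vs i) ∨ (b = u ∧ ∃ i, a = vs i)) := by
      constructor
      · rintro ⟨i, hi⟩
        rw [Sym2.eq_iff] at hi
        rcases hi with ⟨h1, h2⟩ | ⟨h1, h2⟩
        · exact Or.inl ⟨h1, i, h2⟩
        · exact Or.inr ⟨h2, i, h1⟩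
      · rintro (⟨rfl, i, rfl⟩ | ⟨rfl, i, rfl⟩)
        · exact ⟨i, rfl⟩
        · exact ⟨i, Sym2.eq_swap⟩
    rw [hH, SimpleGraph.fromEdgeSet_adj, hS]
    simp only [Set.mem_union, Set.mem_diff, Set.mem_setOf_eq, SimpleGraph.mem_edgeSet]
    rw [hrem, hadd]
    constructor
    · rintro ⟨h, _⟩; exact h
    · intro h
      refine ⟨h, ?_⟩
      rcases h with ⟨hadj, _⟩ | (⟨rfl, i, rfl⟩ | ⟨rfl, i, rfl⟩)
      · exact hadj.ne
      · exact fun he => hvu i he.symm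
      · exact fun he => hvu i he
  have hBA : ∀ a b, B a b = A a b + ∑ i,
      ((if a = u ∧ b = vs i then (1:ℝ) else 0) + (if b = u ∧ a = vs i then (1:ℝ) else 0)
        - (if a = v ∧ b = vs i then (1:ℝ) else 0) - (if b = v ∧ a = vs i then (1:ℝ) else 0)) := by
    intro a b
    have e1 := sum_ind vs hinj (a = u) b
    have e2 := sum_ind vs hinj (b = u) a
    have e3 := sum_ind vs hinj (a = v) b
    have e4 := sum_ind vs hinj (b = v) a
    rw [Finset.sum_sub_distrib, Finset.sum_sub_distrib, Finset.sum_add_distrib, e1, e2, e3, e4]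
    rw [hB, hAdef, SimpleGraph.adjMatrix_apply, SimpleGraph.adjMatrix_apply,
      if_congr (hHadj a b) rfl rfl]
    exact ind_helper (G.Adj a b) _ _ _ _
      (by rintro ⟨rfl, i, rfl⟩; exact hNAdju i)
      (by rintro ⟨rfl, i, rfl⟩ h; exact hNAdju i h.symm)
      (by rintro ⟨⟨ha, _⟩, ⟨_, i, hi⟩⟩; exact hvu i (ha ▸ hi).symm)
      (by rintro ⟨⟨ha, _⟩, ⟨_, i, hi⟩⟩; exact hvsnv i (ha ▸ hi).symm)
      (by rintro ⟨rfl, i, rfl⟩; exact hAdjv i)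
      (by rintro ⟨rfl, i, rfl⟩; exact (hAdjv i).symm)
      (by rintro ⟨rfl, _⟩ ⟨hv, _⟩; exact huv hv)
      (by rintro ⟨_, i, rfl⟩ ⟨hv, _⟩; exact hvsnv i hv)
      (by rintro ⟨_, i, rfl⟩ ⟨hv, _⟩; exact hvsnv i hv)
      (by rintro ⟨rfl, _⟩ ⟨hv, _⟩; exact huv hv)
  have hquad : ∀ M : Matrix V V ℝ, dotProduct x (M.mulVec x) = ∑ a, ∑ b, x a * M a b * x b := by
    intro M
    simp [dotProduct, Matrix.mulVec, Finset.mul_sum, mul_assoc]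
  have hsumpos : (0:ℝ) < ∑ i, x (vs i) :=
    Finset.sum_pos (fun i _ => hpos _) ⟨⟨0, hk⟩, Finset.mem_univ _⟩
  have hQ : dotProduct x (B.mulVec x) = dotProduct x (A.mulVec x) + 2 * (x u - x v) * ∑ i, x (vs i) := by
    rw [hquad, hquad]
    have expand : ∀ a b, x a * B a b * x b = x a * A a b * x b
        + ∑ i, (x a * ((if a = u ∧ b = vs i then (1:ℝ) else 0)
          + (if b = u ∧ a = vs i then (1:ℝ) else 0)
          - (if a = v ∧ b = vs i then (1:ℝ) else 0)
          - (if b = v ∧ a = vs i then (1:ℝ) else 0)) * x b) := by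
      intro a b
      rw [hBA a b, mul_add, add_mul, Finset.mul_sum, Finset.sum_mul]
    simp only [expand]
    simp only [Finset.sum_add_distrib]
    congr 1
    rw [sum_swap3]
    have per_i : ∀ i : Fin k, (∑ a : V, ∑ b : V, x a *
        ((if a = u ∧ b = vs i then (1:ℝ) else 0) + (if b = u ∧ a = vs i then (1:ℝ) else 0)
          - (if a = v ∧ b = vs i then (1:ℝ) else 0) - (if b = v ∧ a = vs i then (1:ℝ) else 0))
        * x b) = 2 * (x u - x v) * x (vs i) := by
      intro i
      simp only [mul_sub, mul_add, sub_mul, add_mul, Finset.sum_sub_distrib,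
        Finset.sum_add_distrib, mul_ite, ite_mul, mul_one, mul_zero, zero_mul, ite_and,
        Finset.sum_ite_eq, Finset.sum_ite_eq', Finset.sum_ite_irrel, Finset.sum_const_zero,
        Finset.mem_univ, if_true]
      ring
    rw [Finset.sum_congr rfl (fun i _ => per_i i), ← Finset.mul_sum]
  have hxx : dotProduct x x = 1 := by
    rw [← hunit]
    simp [dotProduct, sq]
  have hxAx : dotProduct x (A.mulVec x) = specRad G := by
    rw [heig, dotProduct_smul, hxx]
    simp
  have hBH : B.IsHermitian := by
    ext i j
    rw [Matrix.conjTranspose_apply, hB, SimpleGraph.adjMatrix_apply, SimpleGraph.adjMatrix_apply,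
      if_congr (SimpleGraph.adj_comm H j i) rfl rfl, star_trivial]
  obtain ⟨hle, heqc⟩ := rayleigh_helper B hBH
  have h3 : dotProduct x (B.mulVec x) ≤ sSup (spectrum ℝ B) := hle x hunit
  have h2 : specRad G ≤ dotProduct x (B.mulVec x) := by
    rw [hQ, hxAx]
    nlinarith [hsumpos, hx]
  by_contra hcon
  push_neg at hcon
  have hQeq : dotProduct x (B.mulVec x) = sSup (spectrum ℝ B) := by
    refine le_antisymm h3 ?_
    rw [← hspecH]
    exact le_trans hcon h2
  have hBx := heqc x hunit hQeq
  have hu1 : ∀ i : Fin k, ¬ (u = vs i) := fun i h => hvu i h.symm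
  have hrowu : (B.mulVec x) u = (A.mulVec x) u + ∑ i, x (vs i) := by
    simp only [Matrix.mulVec, dotProduct]
    simp only [hBA, add_mul, Finset.sum_add_distrib]
    congr 1
    simp only [Finset.sum_mul]
    rw [Finset.sum_comm]
    refine Finset.sum_congr rfl fun i _ => ?_
    simp [hu1 i, huv, ite_mul, one_mul, zero_mul, Finset.sum_ite_eq', true_and]
  have hAu : (A.mulVec x) u = specRad G * x u := by
    rw [heig]
    simp
  have hBu : (B.mulVec x) u = sSup (spectrum ℝ B) * x u := by
    rw [hBx]
    simp
  have hfin : sSup (spectrum ℝ B) = specRad G := by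
    refine le_antisymm ?_ ?_
    · rw [← hspecH]; exact hcon
    · rw [← hspecH] at h3 ⊢
      exact le_trans h2 h3
  rw [hBu, hfin, hAu] at hrowu
  linarith
end

section
/- Let G be a connected graph with m edges and Perron vector x, let u* be a vertex with maximum entry x_{u*}, U = N(u*), W = V(G)∖(U∪{u*}), U_0 = {u∈U : d_U(u)=0}, U_+ = U∖U_0. Suppose λ(G) > (1 + √(4m−5))/2 and there is a vertex v_j of G with x_j < (1−α)·x_{u*}, where 0 < α < 1. Then: if v_j ∈ W, then e(W) < e(U) − |U_+| + 3/2 − α·d_U(v_j); and if v_j ∈ U_+, then e(W) < e(U) − |U_+| + 3/2 − α·(d_U(v_j) − 1). -/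
open Finset

section auxSec
variable {V : Type*} [Fintype V] [DecidableEq V] (G : SimpleGraph V) [DecidableRel G.Adj]

def subIn (S : Finset V) : SimpleGraph V where
  Adj a b := G.Adj a b ∧ a ∈ S ∧ b ∈ S
  symm := ⟨fun a b h => ⟨h.1.symm, h.2.2, h.2.1⟩⟩
  loopless := ⟨fun a h => G.loopless.irrefl a h.1⟩

instance (S : Finset V) : DecidableRel (subIn G S).Adj :=
  fun a b => inferInstanceAs (Decidable (G.Adj a b ∧ a ∈ S ∧ b ∈ S))

lemma dIn_coe (S : Finset V) (v : V) :
    dIn G ↑S v = (S ∩ G.neighborFinset v).card := by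
  rw [dIn]
  rw [show (↑S : Set V) ∩ G.neighborSet v = ↑(S ∩ G.neighborFinset v) by
    ext w; simp [SimpleGraph.mem_neighborFinset]]
  exact Set.ncard_coe_finset _

lemma eIn_coe (S : Finset V) :
    eIn G ↑S = (subIn G S).edgeFinset.card := by
  rw [eIn]
  rw [show {e ∈ G.edgeSet | ∀ v ∈ e, v ∈ (↑S : Set V)} = ↑(subIn G S).edgeFinset by
    ext e
    induction e with
    | _ a b =>
      simp only [Set.mem_setOf_eq, Finset.coe_sort_coe, Finset.mem_coe,
        SimpleGraph.mem_edgeFinset, SimpleGraph.mem_edgeSet, Sym2.mem_iff]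
      constructor
      · rintro ⟨hadj, hmem⟩
        exact ⟨hadj, hmem a (Or.inl rfl), hmem b (Or.inr rfl)⟩
      · rintro ⟨hadj, ha, hb⟩
        exact ⟨hadj, fun v hv => by rcases hv with h | h <;> subst h <;> assumption⟩]
  exact Set.ncard_coe_finset _

lemma card_inter_nbr (S : Finset V) (v : V) :
    (S ∩ G.neighborFinset v).card = ∑ w ∈ S, if G.Adj v w then 1 else 0 := by
  rw [Finset.sum_boole]
  congr 1
  ext w
  simp [SimpleGraph.mem_neighborFinset, Finset.mem_filter, and_comm]

lemma handshake_sub (S : Finset V) :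
    ∑ v ∈ S, (S ∩ G.neighborFinset v).card = 2 * eIn G ↑S := by
  rw [eIn_coe]
  have hdeg : ∀ v : V, (subIn G S).degree v =
      ∑ w ∈ Finset.univ, if (subIn G S).Adj v w then 1 else 0 := by
    intro v
    rw [Finset.sum_boole, ← SimpleGraph.neighborFinset_eq_filter, SimpleGraph.degree]
    norm_num
  calc ∑ v ∈ S, (S ∩ G.neighborFinset v).card
      = ∑ v ∈ S, ∑ w ∈ S, if G.Adj v w then 1 else 0 :=
        Finset.sum_congr rfl fun v _ => card_inter_nbr G S v
    _ = ∑ v ∈ S, ∑ w ∈ S, if (subIn G S).Adj v w then (1:ℕ) else 0 := by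
        refine Finset.sum_congr rfl fun v hv => Finset.sum_congr rfl fun w hw => ?_
        have : G.Adj v w ↔ (subIn G S).Adj v w := by
          constructor
          · exact fun h => ⟨h, hv, hw⟩
          · exact fun h => h.1
        simp [this]
    _ = ∑ v : V, ∑ w : V, if (subIn G S).Adj v w then (1:ℕ) else 0 := by
        rw [Finset.sum_subset (Finset.subset_univ S) (fun v _ hv => ?_)]
        · refine Finset.sum_congr rfl fun v _ => ?_
          refine Finset.sum_subset (Finset.subset_univ S) (fun w _ hw => ?_)
          simp only [ite_eq_right_iff]
          exact fun h => absurd h.2.2 hw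
        · refine Finset.sum_eq_zero fun w _ => ?_
          simp only [ite_eq_right_iff]
          exact fun h => absurd h.2.1 hv
    _ = ∑ v : V, (subIn G S).degree v :=
        (Finset.sum_congr rfl fun v _ => (hdeg v).symm)
    _ = 2 * (subIn G S).edgeFinset.card := SimpleGraph.sum_degrees_eq_twice_card_edges _


lemma edge_count (ustar : V) (m : ℕ) (hm : G.edgeSet.ncard = m) :
    m = (G.neighborFinset ustar).card + eIn G ↑(G.neighborFinset ustar)
      + eIn G ↑(Finset.univ \ insert ustar (G.neighborFinset ustar))
      + ∑ w ∈ Finset.univ \ insert ustar (G.neighborFinset ustar),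
          (G.neighborFinset ustar ∩ G.neighborFinset w).card := by
  classical
  set Uf := G.neighborFinset ustar with hUf
  set Wf := Finset.univ \ insert ustar Uf with hWf
  have hus : ustar ∉ Uf := by simp [hUf]
  set a : V → V → ℕ := fun v w => if G.Adj v w then 1 else 0 with ha
  have hdeg : ∀ v : V, G.degree v = ∑ w : V, a v w := by
    intro v
    rw [ha, Finset.sum_boole, ← SimpleGraph.neighborFinset_eq_filter, SimpleGraph.degree]
    norm_num
  have h2m : 2 * m = ∑ v : V, ∑ w : V, a v w := by
    have hm' : m = G.edgeFinset.card := by rw [← hm, ← SimpleGraph.coe_edgeFinset, Set.ncard_coe_finset]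
    rw [hm', ← SimpleGraph.sum_degrees_eq_twice_card_edges G]
    exact Finset.sum_congr rfl fun v _ => hdeg v
  -- splitting of a sum over univ
  have hsplit : ∀ f : V → ℕ, ∑ v : V, f v = f ustar + ∑ v ∈ Uf, f v + ∑ v ∈ Wf, f v := by
    intro f
    rw [hWf, ← Finset.sum_sdiff (Finset.subset_univ (insert ustar Uf))]
    rw [Finset.sum_insert hus]
    ring
  have hsym : ∀ v w, a v w = a w v := by
    intro v w
    show (if G.Adj v w then 1 else 0) = (if G.Adj w v then 1 else 0)
    exact if_congr (G.adj_comm v w) rfl rfl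
  have hself : a ustar ustar = 0 := by simp [ha]
  have hU1 : ∑ v ∈ Uf, a ustar v = Uf.card := by
    rw [Finset.sum_congr rfl fun v hv => ?_, Finset.sum_const, smul_eq_mul, mul_one]
    simp only [ha, hUf, SimpleGraph.mem_neighborFinset] at hv ⊢
    rw [if_pos hv]
  have hW1 : ∑ w ∈ Wf, a ustar w = 0 := by
    refine Finset.sum_eq_zero fun w hw => ?_
    simp only [hWf, Finset.mem_sdiff, Finset.mem_insert, not_or] at hw
    simp only [ha, ite_eq_right_iff]
    intro hadj
    exact absurd (SimpleGraph.mem_neighborFinset _ _ _ |>.mpr hadj) hw.2.2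
  have hUU : ∑ u ∈ Uf, ∑ v ∈ Uf, a u v = 2 * eIn G ↑Uf := by
    rw [← handshake_sub G Uf]
    exact Finset.sum_congr rfl fun v _ => (card_inter_nbr G Uf v).symm
  have hWW : ∑ u ∈ Wf, ∑ v ∈ Wf, a u v = 2 * eIn G ↑Wf := by
    rw [← handshake_sub G Wf]
    exact Finset.sum_congr rfl fun v _ => (card_inter_nbr G Wf v).symm
  have hWU : ∑ w ∈ Wf, ∑ u ∈ Uf, a w u = ∑ w ∈ Wf, (Uf ∩ G.neighborFinset w).card :=
    Finset.sum_congr rfl fun w _ => (card_inter_nbr G Uf w).symm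
  have hUW : ∑ u ∈ Uf, ∑ w ∈ Wf, a u w = ∑ w ∈ Wf, ∑ u ∈ Uf, a w u := by
    rw [Finset.sum_comm]
    exact Finset.sum_congr rfl fun w _ => Finset.sum_congr rfl fun u _ => hsym u w
  have key : 2 * m = 2 * Uf.card + 2 * eIn G ↑Uf + 2 * eIn G ↑Wf
      + 2 * ∑ w ∈ Wf, (Uf ∩ G.neighborFinset w).card := by
    rw [h2m, hsplit (fun v => ∑ w : V, a v w)]
    rw [hsplit (a ustar)]
    rw [Finset.sum_congr rfl (fun u (_ : u ∈ Uf) => hsplit (a u)),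
        Finset.sum_congr rfl (fun w (_ : w ∈ Wf) => hsplit (a w))]
    rw [Finset.sum_add_distrib, Finset.sum_add_distrib, Finset.sum_add_distrib,
        Finset.sum_add_distrib]
    have h1 : ∑ u ∈ Uf, a u ustar = Uf.card := by
      rw [← hU1]; exact Finset.sum_congr rfl fun u _ => (hsym ustar u).symm
    have h2 : ∑ w ∈ Wf, a w ustar = 0 := by
      rw [← hW1]; exact Finset.sum_congr rfl fun w _ => (hsym ustar w).symm
    rw [hself, hU1, hW1, h1, h2, hUU, hWW, hUW, hWU]
    ring
  omega


end auxSec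

set_option maxHeartbeats 1000000 in
/-- If `λ(G) > (1 + √(4m-5))/2` and `x_j < (1-α)x_{u*}` with `0 < α < 1`, then
`e(W) < e(U) - |U₊| + 3/2 - α·d_U(v_j)` for `v_j ∈ W`, and
`e(W) < e(U) - |U₊| + 3/2 - α·(d_U(v_j) - 1)` for `v_j ∈ U₊`. -/
theorem stmt_4 {V : Type*} [Fintype V] [DecidableEq V] (G : SimpleGraph V)
    [DecidableRel G.Adj] (hconn : G.Connected)
    (m : ℕ) (hm : G.edgeSet.ncard = m)
    (x : V → ℝ) (hpos : ∀ v, 0 < x v) (hunit : ∑ v : V, x v ^ 2 = 1)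
    (heig : (SimpleGraph.adjMatrix ℝ G).mulVec x = specRad G • x)
    (ustar : V) (hmaxx : ∀ v, x v ≤ x ustar)
    (α : ℝ) (hα0 : 0 < α) (hα1 : α < 1)
    (vj : V) (hvj : x vj < (1 - α) * x ustar)
    (hlam : (1 + Real.sqrt (4 * (m : ℝ) - 5)) / 2 < specRad G) :
    (vj ∈ Wset G ustar →
      (eIn G (Wset G ustar) : ℝ) <
        (eIn G (Uset G ustar) : ℝ) - ((Uplusset G ustar).ncard : ℝ) + 3 / 2
          - α * (dIn G (Uset G ustar) vj : ℝ)) ∧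
    (vj ∈ Uplusset G ustar →
      (eIn G (Wset G ustar) : ℝ) <
        (eIn G (Uset G ustar) : ℝ) - ((Uplusset G ustar).ncard : ℝ) + 3 / 2
          - α * ((dIn G (Uset G ustar) vj : ℝ) - 1)) := by
  classical
  set ρ := specRad G with hρdef
  have hX : 0 < x ustar := hpos ustar
  -- eigen equation pointwise
  have heig' : ∀ v, ∑ w ∈ G.neighborFinset v, x w = ρ * x v := by
    intro v
    have := congrFun heig v
    rwa [SimpleGraph.adjMatrix_mulVec_apply, Pi.smul_apply, smul_eq_mul] at this
  -- spectral gap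
  have hgap : (m : ℝ) - 3 / 2 < ρ ^ 2 - ρ := by
    rcases le_or_gt 0 (4 * (m : ℝ) - 5) with h | h
    · set s := Real.sqrt (4 * (m : ℝ) - 5) with hs
      have hs0 : 0 ≤ s := Real.sqrt_nonneg _
      have hs2 : s ^ 2 = 4 * (m : ℝ) - 5 := Real.sq_sqrt h
      have h1 : 0 < ρ - (1 + s) / 2 := by linarith [hlam]
      have h2 : 0 < ρ - (1 - s) / 2 := by linarith
      nlinarith [mul_pos h1 h2]
    · have hm2 : m < 2 := by
        by_contra hc
        push_neg at hc
        have : (2 : ℝ) ≤ (m : ℝ) := by exact_mod_cast hc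
        linarith
      have hm1 : (m : ℝ) ≤ 1 := by
        have : m ≤ 1 := by omega
        exact_mod_cast this
      have hs : Real.sqrt (4 * (m : ℝ) - 5) = 0 :=
        Real.sqrt_eq_zero_of_nonpos (by linarith)
      rw [hs] at hlam
      nlinarith [sq_nonneg (ρ - 1 / 2)]
  set Uf := G.neighborFinset ustar with hUf
  set Wf := Finset.univ \ insert ustar Uf with hWf
  have hus : ustar ∉ Uf := by simp [hUf]
  set d : V → ℕ := fun v => (Uf ∩ G.neighborFinset v).card with hd
  set X := x ustar with hXdef
  -- splitting sums over univ
  have hsplitR : ∀ f : V → ℝ, ∑ v : V, f v = f ustar + ∑ v ∈ Uf, f v + ∑ v ∈ Wf, f v := by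
    intro f
    rw [hWf, ← Finset.sum_sdiff (Finset.subset_univ (insert ustar Uf)),
      Finset.sum_insert hus]
    ring
  -- inner neighborhood sums for u ∈ Uf
  have hinner : ∀ u ∈ Uf, ∑ w ∈ G.neighborFinset u, x w =
      X + (∑ v ∈ Uf, if G.Adj u v then x v else 0)
        + (∑ w ∈ Wf, if G.Adj u w then x w else 0) := by
    intro u hu
    have h1 : ∑ w ∈ G.neighborFinset u, x w = ∑ w : V, if G.Adj u w then x w else 0 := by
      rw [SimpleGraph.neighborFinset_eq_filter, Finset.sum_filter]
    rw [h1, hsplitR]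
    have hadj : G.Adj u ustar := by
      have h2 : G.Adj ustar u := by rwa [hUf, SimpleGraph.mem_neighborFinset] at hu
      exact h2.symm
    rw [if_pos hadj]
  -- swap lemma
  have hswap : ∀ T : Finset V, ∑ u ∈ Uf, ∑ v ∈ T, (if G.Adj u v then x v else 0)
      = ∑ v ∈ T, (d v : ℝ) * x v := by
    intro T
    rw [Finset.sum_comm]
    refine Finset.sum_congr rfl fun v _ => ?_
    have h1 : ∀ u, (if G.Adj u v then x v else 0) = (if G.Adj v u then (1 : ℝ) else 0) * x v := by
      intro u
      rw [if_congr (G.adj_comm u v) rfl rfl]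
      split <;> ring
    rw [Finset.sum_congr rfl fun u _ => h1 u, ← Finset.sum_mul, Finset.sum_boole]
    have h2 : Finset.filter (fun u => G.Adj v u) Uf = Uf ∩ G.neighborFinset v := by
      ext u
      simp [SimpleGraph.mem_neighborFinset]
    rw [h2]
  -- key identity
  have hF4 : ρ * X = ∑ u ∈ Uf, x u := (heig' ustar).symm
  have hkey : ρ ^ 2 * X = (Uf.card : ℝ) * X + ∑ v ∈ Uf, (d v : ℝ) * x v
      + ∑ w ∈ Wf, (d w : ℝ) * x w := by
    have h1 : ρ ^ 2 * X = ∑ u ∈ Uf, (ρ * x u) := by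
      rw [← Finset.mul_sum, ← hF4]; ring
    rw [h1, Finset.sum_congr rfl fun u hu => ((heig' u).symm.trans (hinner u hu)),
      Finset.sum_add_distrib, Finset.sum_add_distrib, Finset.sum_const, hswap, hswap]
    simp [nsmul_eq_mul]
  have hkey2 : ρ ^ 2 * X - ρ * X = (Uf.card : ℝ) * X
      + (∑ v ∈ Uf, ((d v : ℝ) - 1) * x v) + ∑ w ∈ Wf, (d w : ℝ) * x w := by
    have h1 : ∑ v ∈ Uf, ((d v : ℝ) - 1) * x v
        = ∑ v ∈ Uf, (d v : ℝ) * x v - ∑ v ∈ Uf, x v := by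
      rw [← Finset.sum_sub_distrib]
      exact Finset.sum_congr rfl fun v _ => by ring
    rw [hkey, hF4, h1]; ring
  -- U_+ as a finset
  set Upf := Uf.filter (fun v => d v ≠ 0) with hUpf
  -- edge counts
  have hsum_dU : ∑ v ∈ Uf, d v = 2 * eIn G ↑Uf := handshake_sub G Uf
  have hsum_dUp : ∑ v ∈ Upf, d v = ∑ v ∈ Uf, d v := Finset.sum_filter_ne_zero Uf
  have hedge : (m : ℝ) = (Uf.card : ℝ) + (eIn G ↑Uf : ℝ) + (eIn G ↑Wf : ℝ)
      + ∑ w ∈ Wf, (d w : ℝ) := by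
    have := edge_count G ustar m hm
    rw [← hUf, ← hWf] at this
    rw [this]
    push_cast
    ring
  -- bound lemmas
  have hbound1 : ∀ (T : Finset V) (c : V → ℝ), (∀ v ∈ T, 0 ≤ c v) →
      ∑ v ∈ T, c v * x v ≤ (∑ v ∈ T, c v) * X := by
    intro T c hc
    rw [Finset.sum_mul]
    exact Finset.sum_le_sum fun v hv => mul_le_mul_of_nonneg_left (hmaxx v) (hc v hv)
  have hbound2 : ∀ (T : Finset V) (c : V → ℝ), (∀ v ∈ T, 0 ≤ c v) → vj ∈ T →
      ∑ v ∈ T, c v * x v ≤ (∑ v ∈ T, c v) * X - α * c vj * X := by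
    intro T c hc hvjT
    rw [← Finset.add_sum_erase T (fun v => c v * x v) hvjT,
      ← Finset.add_sum_erase T c hvjT]
    have h1 : c vj * x vj ≤ c vj * ((1 - α) * X) :=
      mul_le_mul_of_nonneg_left (le_of_lt hvj) (hc vj hvjT)
    have h2 : ∑ v ∈ T.erase vj, c v * x v ≤ (∑ v ∈ T.erase vj, c v) * X :=
      hbound1 _ _ fun v hv => hc v (Finset.mem_of_mem_erase hv)
    nlinarith [h1, h2]
  -- bound on the U-sum, without correction
  have hUsum_le : ∑ v ∈ Uf, ((d v : ℝ) - 1) * x v ≤ ∑ v ∈ Upf, ((d v : ℝ) - 1) * x v := by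
    rw [← Finset.sum_filter_add_sum_filter_not Uf (fun v => d v ≠ 0)
      (fun v => ((d v : ℝ) - 1) * x v)]
    have h0 : ∑ v ∈ Uf.filter (fun v => ¬ d v ≠ 0), ((d v : ℝ) - 1) * x v ≤ 0 := by
      refine Finset.sum_nonpos fun v hv => ?_
      have hdv : d v = 0 := by
        simpa using (Finset.mem_filter.mp hv).2
      rw [hdv]
      push_cast
      nlinarith [(hpos v).le]
    rw [← hUpf]
    linarith
  have hUp_nonneg : ∀ v ∈ Upf, (0 : ℝ) ≤ (d v : ℝ) - 1 := by
    intro v hv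
    have : d v ≠ 0 := (Finset.mem_filter.mp hv).2
    have : 1 ≤ d v := Nat.one_le_iff_ne_zero.mpr this
    have : (1 : ℝ) ≤ (d v : ℝ) := by exact_mod_cast this
    linarith
  have hUpsum : ∑ v ∈ Upf, ((d v : ℝ) - 1) = 2 * (eIn G ↑Uf : ℝ) - (Upf.card : ℝ) := by
    rw [Finset.sum_sub_distrib, Finset.sum_const]
    have : ∑ v ∈ Upf, (d v : ℝ) = ((∑ v ∈ Upf, d v : ℕ) : ℝ) := by push_cast; ring
    rw [this, hsum_dUp, hsum_dU]
    push_cast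
    ring
  -- set identifications
  have hUset : Uset G ustar = ↑Uf := by
    rw [hUf, Uset, SimpleGraph.neighborFinset]
    exact (Set.coe_toFinset _).symm
  have hWset : Wset G ustar = ↑Wf := by
    rw [Wset, hWf]
    ext v
    simp [hUf, SimpleGraph.mem_neighborFinset, or_comm, eq_comm]
  have hdIn : ∀ v, dIn G (Uset G ustar) v = d v := by
    intro v
    rw [hUset, dIn_coe G Uf v, hd]
  have hUplus_set : Uplusset G ustar = ↑Upf := by
    rw [Uplusset]
    ext v
    have h1 : G.neighborSet ustar = ↑Uf := by rw [← hUset]; rfl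
    simp only [Set.mem_setOf_eq, h1, Finset.mem_coe, hUpf, Finset.mem_filter]
    constructor
    · rintro ⟨h2, h3⟩
      refine ⟨h2, ?_⟩
      rwa [dIn_coe G Uf v] at h3
    · rintro ⟨h2, h3⟩
      refine ⟨h2, ?_⟩
      rwa [dIn_coe G Uf v]
  have hUplus : (Uplusset G ustar).ncard = Upf.card := by
    rw [hUplus_set, Set.ncard_coe_finset]
  -- the two cases
  constructor
  · intro hvjW
    have hvjWf : vj ∈ Wf := by rw [hWset] at hvjW; exact hvjW
    have hW_le : ∑ w ∈ Wf, (d w : ℝ) * x w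
        ≤ (∑ w ∈ Wf, (d w : ℝ)) * X - α * (d vj : ℝ) * X :=
      hbound2 Wf (fun w => (d w : ℝ)) (fun w _ => Nat.cast_nonneg _) hvjWf
    have hU_le : ∑ v ∈ Uf, ((d v : ℝ) - 1) * x v
        ≤ (2 * (eIn G ↑Uf : ℝ) - (Upf.card : ℝ)) * X := by
      calc ∑ v ∈ Uf, ((d v : ℝ) - 1) * x v
          ≤ ∑ v ∈ Upf, ((d v : ℝ) - 1) * x v := hUsum_le
        _ ≤ (∑ v ∈ Upf, ((d v : ℝ) - 1)) * X := hbound1 _ _ hUp_nonneg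
        _ = (2 * (eIn G ↑Uf : ℝ) - (Upf.card : ℝ)) * X := by rw [hUpsum]
    have hfin : ρ ^ 2 - ρ ≤ (Uf.card : ℝ) + 2 * (eIn G ↑Uf : ℝ) - (Upf.card : ℝ)
        + (∑ w ∈ Wf, (d w : ℝ)) - α * (d vj : ℝ) := by
      have h1 : ρ ^ 2 * X - ρ * X ≤ ((Uf.card : ℝ) + 2 * (eIn G ↑Uf : ℝ) - (Upf.card : ℝ)
          + (∑ w ∈ Wf, (d w : ℝ)) - α * (d vj : ℝ)) * X := by
        rw [hkey2]
        nlinarith [hW_le, hU_le]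
      have h2 : (ρ ^ 2 - ρ) * X ≤ ((Uf.card : ℝ) + 2 * (eIn G ↑Uf : ℝ) - (Upf.card : ℝ)
          + (∑ w ∈ Wf, (d w : ℝ)) - α * (d vj : ℝ)) * X := by linarith [h1]
      exact le_of_mul_le_mul_right h2 hX
    rw [hdIn vj, hWset, hUset, hUplus]
    linarith [hgap, hedge, hfin]
  · intro hvjU
    have hvjUpf : vj ∈ Upf := by
      rw [hUplus_set] at hvjU; exact hvjU
    have hW_le : ∑ w ∈ Wf, (d w : ℝ) * x w ≤ (∑ w ∈ Wf, (d w : ℝ)) * X :=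
      hbound1 Wf (fun w => (d w : ℝ)) (fun w _ => Nat.cast_nonneg _)
    have hU_le : ∑ v ∈ Uf, ((d v : ℝ) - 1) * x v
        ≤ (2 * (eIn G ↑Uf : ℝ) - (Upf.card : ℝ)) * X - α * ((d vj : ℝ) - 1) * X := by
      calc ∑ v ∈ Uf, ((d v : ℝ) - 1) * x v
          ≤ ∑ v ∈ Upf, ((d v : ℝ) - 1) * x v := hUsum_le
        _ ≤ (∑ v ∈ Upf, ((d v : ℝ) - 1)) * X - α * ((d vj : ℝ) - 1) * X :=
            hbound2 Upf (fun v => (d v : ℝ) - 1) hUp_nonneg hvjUpf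
        _ = (2 * (eIn G ↑Uf : ℝ) - (Upf.card : ℝ)) * X - α * ((d vj : ℝ) - 1) * X := by
            rw [hUpsum]
    have hfin : ρ ^ 2 - ρ ≤ (Uf.card : ℝ) + 2 * (eIn G ↑Uf : ℝ) - (Upf.card : ℝ)
        + (∑ w ∈ Wf, (d w : ℝ)) - α * ((d vj : ℝ) - 1) := by
      have h1 : ρ ^ 2 * X - ρ * X ≤ ((Uf.card : ℝ) + 2 * (eIn G ↑Uf : ℝ) - (Upf.card : ℝ)
          + (∑ w ∈ Wf, (d w : ℝ)) - α * ((d vj : ℝ) - 1)) * X := by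
        rw [hkey2]
        nlinarith [hW_le, hU_le]
      have h2 : (ρ ^ 2 - ρ) * X ≤ ((Uf.card : ℝ) + 2 * (eIn G ↑Uf : ℝ) - (Upf.card : ℝ)
          + (∑ w ∈ Wf, (d w : ℝ)) - α * ((d vj : ℝ) - 1)) * X := by linarith [h1]
      exact le_of_mul_le_mul_right h2 hX
    rw [hdIn vj, hWset, hUset, hUplus]
    linarith [hgap, hedge, hfin]
end

section
/- Let G be a connected graph with m edges and Perron vector x, let u* be a vertex with maximum entry x_{u*}, U = N(u*), W = V(G)∖(U∪{u*}), U_0 = {u∈U : d_U(u)=0}, U_+ = U∖U_0. Suppose λ(G) > (1 + √(4m−7))/2 and there is a vertex v_j of G with x_j < (1−α)·x_{u*}, where 0 < α < 1. Then: if v_j ∈ W, then e(W) < e(U) − |U_+| + 2 − α·d_U(v_j); and if v_j ∈ U_+, then e(W) < e(U) − |U_+| + 2 − α·(d_U(v_j) − 1). -/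
open Finset

namespace Stmt5Aux
open SimpleGraph

variable {V : Type*} [Fintype V] [DecidableEq V] (G : SimpleGraph V) [DecidableRel G.Adj]

/-- Subgraph of `G` restricted to a finset `s`. -/
def restrictSub (s : Finset V) : SimpleGraph V where
  Adj a b := G.Adj a b ∧ a ∈ s ∧ b ∈ s
  symm := ⟨fun a b ⟨h, ha, hb⟩ => ⟨h.symm, hb, ha⟩⟩
  loopless := ⟨fun a h => G.loopless.irrefl a h.1⟩

instance (s : Finset V) : DecidableRel (restrictSub G s).Adj :=
  fun a b => inferInstanceAs (Decidable (G.Adj a b ∧ a ∈ s ∧ b ∈ s))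

/-- Bipartite-like subgraph of `G` between two finsets. -/
def crossSub (s t : Finset V) : SimpleGraph V where
  Adj a b := G.Adj a b ∧ ((a ∈ s ∧ b ∈ t) ∨ (a ∈ t ∧ b ∈ s))
  symm := by constructor; rintro a b ⟨h, h2⟩; exact ⟨h.symm, by tauto⟩
  loopless := ⟨fun a h => G.loopless.irrefl a h.1⟩

instance (s t : Finset V) : DecidableRel (crossSub G s t).Adj :=
  fun a b => inferInstanceAs (Decidable (G.Adj a b ∧ _))

lemma restrictSub_adj (s : Finset V) (a b : V) :
    (restrictSub G s).Adj a b ↔ G.Adj a b ∧ a ∈ s ∧ b ∈ s := Iff.rfl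

lemma crossSub_adj (s t : Finset V) (a b : V) :
    (crossSub G s t).Adj a b ↔ G.Adj a b ∧ ((a ∈ s ∧ b ∈ t) ∨ (a ∈ t ∧ b ∈ s)) := Iff.rfl

lemma restrict_neighborFinset (s : Finset V) {u : V} (hu : u ∈ s) :
    (restrictSub G s).neighborFinset u = s ∩ G.neighborFinset u := by
  ext b
  simp [mem_neighborFinset, restrictSub_adj, hu, and_comm]

lemma restrict_degree_zero (s : Finset V) {u : V} (hu : u ∉ s) :
    (restrictSub G s).degree u = 0 := by
  rw [← card_neighborFinset_eq_degree]
  convert Finset.card_empty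
  ext b
  simp [mem_neighborFinset, restrictSub_adj, hu]

lemma handshake_restrict (s : Finset V) :
    ∑ u ∈ s, (s ∩ G.neighborFinset u).card = 2 * (restrictSub G s).edgeFinset.card := by
  rw [← SimpleGraph.sum_degrees_eq_twice_card_edges]
  rw [← Finset.sum_subset (Finset.subset_univ s)
    (fun u _ hu => restrict_degree_zero G s hu)]
  refine Finset.sum_congr rfl fun u hu => ?_
  rw [← card_neighborFinset_eq_degree, restrict_neighborFinset G s hu]

lemma eIn_restrict (s : Finset V) :
    eIn G ↑s = (restrictSub G s).edgeFinset.card := by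
  unfold eIn
  have hset : {e ∈ G.edgeSet | ∀ v ∈ e, v ∈ (↑s : Set V)} = (restrictSub G s).edgeSet := by
    ext e
    induction e using Sym2.ind with
    | _ a b =>
      simp only [Set.mem_setOf_eq, mem_edgeSet, Sym2.mem_iff, restrictSub, Finset.mem_coe]
      constructor
      · rintro ⟨h, h2⟩; exact ⟨h, h2 a (Or.inl rfl), h2 b (Or.inr rfl)⟩
      · rintro ⟨h, ha, hb⟩; exact ⟨h, by rintro v (rfl | rfl) <;> assumption⟩
  rw [hset, ← SimpleGraph.coe_edgeFinset, Set.ncard_coe_finset]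

lemma cross_nf_left (s t : Finset V) (hdisj : Disjoint s t) {a : V} (ha : a ∈ s) :
    (crossSub G s t).neighborFinset a = t ∩ G.neighborFinset a := by
  ext b
  have := Finset.disjoint_left.mp hdisj ha
  simp only [mem_neighborFinset, crossSub_adj, Finset.mem_inter]
  constructor
  · rintro ⟨h, (⟨_, hb⟩ | ⟨hat, _⟩)⟩
    · exact ⟨hb, h⟩
    · exact absurd hat this
  · rintro ⟨hb, h⟩; exact ⟨h, Or.inl ⟨ha, hb⟩⟩

lemma cross_nf_right (s t : Finset V) (hdisj : Disjoint s t) {a : V} (ha : a ∈ t) :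
    (crossSub G s t).neighborFinset a = s ∩ G.neighborFinset a := by
  ext b
  have := Finset.disjoint_right.mp hdisj ha
  simp only [mem_neighborFinset, crossSub_adj, Finset.mem_inter]
  constructor
  · rintro ⟨h, (⟨has, _⟩ | ⟨_, hb⟩)⟩
    · exact absurd has this
    · exact ⟨hb, h⟩
  · rintro ⟨hb, h⟩; exact ⟨h, Or.inr ⟨ha, hb⟩⟩

lemma cross_degree_zero (s t : Finset V) {a : V} (has : a ∉ s) (hat : a ∉ t) :
    (crossSub G s t).degree a = 0 := by
  rw [← card_neighborFinset_eq_degree]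
  convert Finset.card_empty
  ext b
  simp only [mem_neighborFinset, crossSub_adj, Finset.notMem_empty, iff_false]
  rintro ⟨_, (⟨h, _⟩ | ⟨h, _⟩)⟩ <;> [exact has h; exact hat h]

lemma sum_card_inter_comm (s t : Finset V) :
    ∑ u ∈ s, (t ∩ G.neighborFinset u).card = ∑ w ∈ t, (s ∩ G.neighborFinset w).card := by
  have key : ∀ (b : Finset V) (u : V),
      (b ∩ G.neighborFinset u).card = ∑ w ∈ b, if G.Adj u w then 1 else 0 := by
    intro b u
    have : b ∩ G.neighborFinset u = b.filter (fun w => G.Adj u w) := by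
      ext w; simp [Finset.mem_inter, mem_neighborFinset]
    rw [this, Finset.card_filter]
  simp only [key]
  rw [Finset.sum_comm]
  refine Finset.sum_congr rfl fun w _ => Finset.sum_congr rfl fun u _ => ?_
  exact if_congr (G.adj_comm u w) rfl rfl

lemma cross_card (s t : Finset V) (hdisj : Disjoint s t) :
    (crossSub G s t).edgeFinset.card = ∑ w ∈ t, (s ∩ G.neighborFinset w).card := by
  have h2 : 2 * (crossSub G s t).edgeFinset.card = 2 * ∑ w ∈ t, (s ∩ G.neighborFinset w).card := by
    rw [← SimpleGraph.sum_degrees_eq_twice_card_edges]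
    have hsub : s ∪ t ⊆ Finset.univ := Finset.subset_univ _
    rw [← Finset.sum_subset hsub (fun a _ ha => by
      rw [Finset.mem_union] at ha; push_neg at ha
      exact cross_degree_zero G s t ha.1 ha.2)]
    rw [Finset.sum_union hdisj]
    have h1 : ∑ u ∈ s, (crossSub G s t).degree u = ∑ u ∈ s, (t ∩ G.neighborFinset u).card :=
      Finset.sum_congr rfl fun u hu => by
        rw [← card_neighborFinset_eq_degree, cross_nf_left G s t hdisj hu]
    have h2 : ∑ u ∈ t, (crossSub G s t).degree u = ∑ u ∈ t, (s ∩ G.neighborFinset u).card :=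
      Finset.sum_congr rfl fun u hu => by
        rw [← card_neighborFinset_eq_degree, cross_nf_right G s t hdisj hu]
    rw [h1, h2, sum_card_inter_comm, two_mul]
  omega


set_option maxHeartbeats 2000000 in
lemma edge_partition (ustar : V) :
    G.edgeFinset.card =
      (G.neighborFinset ustar).card
      + (restrictSub G (G.neighborFinset ustar)).edgeFinset.card
      + (restrictSub G (Finset.univ \ insert ustar (G.neighborFinset ustar))).edgeFinset.card
      + (crossSub G (G.neighborFinset ustar)
          (Finset.univ \ insert ustar (G.neighborFinset ustar))).edgeFinset.card := by
  classical
  set Uf := G.neighborFinset ustar with hUf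
  set Wf := Finset.univ \ insert ustar Uf with hWf
  have hUW : ∀ v : V, v ∈ Uf → v ∉ Wf := by
    intro v hv
    simp [hWf, Finset.mem_sdiff, hv]
  have hsU : ustar ∉ Uf := by simp [hUf]
  have hsW : ustar ∉ Wf := by simp [hWf]
  have htr : ∀ v : V, v = ustar ∨ v ∈ Uf ∨ v ∈ Wf := by
    intro v
    by_cases h1 : v = ustar
    · exact Or.inl h1
    · by_cases h2 : v ∈ Uf
      · exact Or.inr (Or.inl h2)
      · exact Or.inr (Or.inr (by simp [hWf, Finset.mem_sdiff, h1, h2]))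
  set F1 := G.edgeFinset.filter (fun e => ustar ∈ e) with hF1
  set F2 := (restrictSub G Uf).edgeFinset with hF2
  set F3 := (restrictSub G Wf).edgeFinset with hF3
  set F4 := (crossSub G Uf Wf).edgeFinset with hF4
  have memF1 : ∀ a b : V, s(a, b) ∈ F1 ↔ G.Adj a b ∧ (ustar = a ∨ ustar = b) := by
    intro a b
    simp [hF1, Finset.mem_filter, mem_edgeFinset, SimpleGraph.mem_edgeSet, Sym2.mem_iff]
  have memF2 : ∀ a b : V, s(a, b) ∈ F2 ↔ G.Adj a b ∧ a ∈ Uf ∧ b ∈ Uf := by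
    intro a b
    simp [hF2, mem_edgeFinset, SimpleGraph.mem_edgeSet, restrictSub_adj]
  have memF3 : ∀ a b : V, s(a, b) ∈ F3 ↔ G.Adj a b ∧ a ∈ Wf ∧ b ∈ Wf := by
    intro a b
    simp [hF3, mem_edgeFinset, SimpleGraph.mem_edgeSet, restrictSub_adj]
  have memF4 : ∀ a b : V, s(a, b) ∈ F4 ↔
      G.Adj a b ∧ ((a ∈ Uf ∧ b ∈ Wf) ∨ (a ∈ Wf ∧ b ∈ Uf)) := by
    intro a b
    simp [hF4, mem_edgeFinset, SimpleGraph.mem_edgeSet, crossSub_adj]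
  have cover : G.edgeFinset = F1 ∪ (F2 ∪ (F3 ∪ F4)) := by
    ext e
    induction e using Sym2.ind with
    | _ a b =>
      simp only [Finset.mem_union, memF1, memF2, memF3, memF4, mem_edgeFinset,
        SimpleGraph.mem_edgeSet]
      constructor
      · intro h
        have ha := htr a
        have hb := htr b
        have hadjU : a = ustar → b ∈ Uf := fun h1 => by
          rw [hUf, mem_neighborFinset]; exact h1 ▸ h
        have hadjU' : b = ustar → a ∈ Uf := fun h1 => by
          rw [hUf, mem_neighborFinset]; exact (h1 ▸ h).symm
        rcases ha with rfl | haU | haW <;> rcases hb with rfl | hbU | hbW <;> tauto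
      · tauto
  have d1 : Disjoint F1 (F2 ∪ (F3 ∪ F4)) := by
    rw [Finset.disjoint_left]
    intro e he he'
    induction e using Sym2.ind with
    | _ a b =>
      rw [memF1] at he
      simp only [Finset.mem_union, memF2, memF3, memF4] at he'
      have h1 := hUW a
      have h2 := hUW b
      rcases he.2 with rfl | rfl <;> tauto
  have d2 : Disjoint F2 (F3 ∪ F4) := by
    rw [Finset.disjoint_left]
    intro e he he'
    induction e using Sym2.ind with
    | _ a b =>
      rw [memF2] at he
      simp only [Finset.mem_union, memF3, memF4] at he'
      have h1 := hUW a
      have h2 := hUW b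
      tauto
  have d3 : Disjoint F3 F4 := by
    rw [Finset.disjoint_left]
    intro e he he'
    induction e using Sym2.ind with
    | _ a b =>
      rw [memF3] at he
      rw [memF4] at he'
      have h1 := hUW a
      have h2 := hUW b
      tauto
  have hF1card : F1.card = Uf.card := by
    rw [hF1, ← SimpleGraph.incidenceFinset_eq_filter, card_incidenceFinset_eq_degree,
      hUf, card_neighborFinset_eq_degree]
  rw [cover, Finset.card_union_of_disjoint d1, Finset.card_union_of_disjoint d2,
    Finset.card_union_of_disjoint d3, hF1card]
  ring


lemma Uset_coe (ustar : V) : Uset G ustar = ↑(G.neighborFinset ustar) := by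
  ext v; simp [Uset]

lemma Wset_coe (ustar : V) :
    Wset G ustar = ↑(Finset.univ \ insert ustar (G.neighborFinset ustar)) := by
  ext v
  simp only [Wset, Set.mem_diff, Set.mem_univ, Set.mem_union, Set.mem_singleton_iff,
    Finset.coe_sdiff, Finset.coe_insert, Finset.coe_univ, SimpleGraph.mem_neighborSet,
    Set.mem_insert_iff, Finset.mem_coe, SimpleGraph.mem_neighborFinset, true_and]
  tauto

lemma dIn_eq (ustar u : V) :
    dIn G (Uset G ustar) u = (G.neighborFinset ustar ∩ G.neighborFinset u).card := by
  unfold dIn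
  have h : (Uset G ustar ∩ G.neighborSet u)
      = ↑(G.neighborFinset ustar ∩ G.neighborFinset u) := by
    rw [Uset_coe, Finset.coe_inter]
    congr 1
    ext w; simp
  rw [h, Set.ncard_coe_finset]

lemma Uplus_card (ustar : V) :
    (Uplusset G ustar).ncard
      = ((G.neighborFinset ustar).filter
          (fun u => (G.neighborFinset ustar ∩ G.neighborFinset u).card ≠ 0)).card := by
  have h : Uplusset G ustar = ↑((G.neighborFinset ustar).filter
      (fun u => (G.neighborFinset ustar ∩ G.neighborFinset u).card ≠ 0)) := by
    ext v
    have hd := dIn_eq G ustar v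
    simp only [Uplusset, Set.mem_setOf_eq, Finset.coe_filter, SimpleGraph.mem_neighborSet,
      SimpleGraph.mem_neighborFinset]
    rw [show dIn G (G.neighborSet ustar) v = dIn G (Uset G ustar) v from rfl, hd]
  rw [h, Set.ncard_coe_finset]

lemma mem_Uplus_iff (ustar v : V) :
    v ∈ Uplusset G ustar ↔ v ∈ G.neighborFinset ustar ∧
      (G.neighborFinset ustar ∩ G.neighborFinset v).card ≠ 0 := by
  have hd := dIn_eq G ustar v
  simp only [Uplusset, Set.mem_setOf_eq, SimpleGraph.mem_neighborSet,
    SimpleGraph.mem_neighborFinset]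
  rw [show dIn G (G.neighborSet ustar) v = dIn G (Uset G ustar) v from rfl, hd]

end Stmt5Aux


set_option maxHeartbeats 2000000 in
/-- If `λ(G) > (1 + √(4m-7))/2` and `x_j < (1-α)x_{u*}` with `0 < α < 1`, then
`e(W) < e(U) - |U₊| + 2 - α·d_U(v_j)` for `v_j ∈ W`, and
`e(W) < e(U) - |U₊| + 2 - α·(d_U(v_j) - 1)` for `v_j ∈ U₊`. -/
theorem stmt_5 {V : Type*} [Fintype V] [DecidableEq V] (G : SimpleGraph V)
    [DecidableRel G.Adj] (hconn : G.Connected)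
    (m : ℕ) (hm : G.edgeSet.ncard = m)
    (x : V → ℝ) (hpos : ∀ v, 0 < x v) (hunit : ∑ v : V, x v ^ 2 = 1)
    (heig : (SimpleGraph.adjMatrix ℝ G).mulVec x = specRad G • x)
    (ustar : V) (hmaxx : ∀ v, x v ≤ x ustar)
    (α : ℝ) (hα0 : 0 < α) (hα1 : α < 1)
    (vj : V) (hvj : x vj < (1 - α) * x ustar)
    (hlam : (1 + Real.sqrt (4 * (m : ℝ) - 7)) / 2 < specRad G) :
    (vj ∈ Wset G ustar →
      (eIn G (Wset G ustar) : ℝ) <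
        (eIn G (Uset G ustar) : ℝ) - ((Uplusset G ustar).ncard : ℝ) + 2
          - α * (dIn G (Uset G ustar) vj : ℝ)) ∧
    (vj ∈ Uplusset G ustar →
      (eIn G (Wset G ustar) : ℝ) <
        (eIn G (Uset G ustar) : ℝ) - ((Uplusset G ustar).ncard : ℝ) + 2
          - α * ((dIn G (Uset G ustar) vj : ℝ) - 1)) := by
  classical
  set lam := specRad G with hlamdef
  set Uf := G.neighborFinset ustar with hUfdef
  set Wf := Finset.univ \ insert ustar Uf with hWfdef
  set d : V → ℕ := fun u => (Uf ∩ G.neighborFinset u).card with hddef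
  set UP := Uf.filter (fun u => d u ≠ 0) with hUPdef
  have hxpos : 0 < x ustar := hpos ustar
  have hsU : ustar ∉ Uf := by simp [hUfdef]
  have hdisjUW : Disjoint Uf Wf := by
    rw [hWfdef]
    exact Finset.disjoint_sdiff.mono_left (Finset.subset_insert ustar Uf)
  -- eigenvalue equation
  have hx : ∀ u : V, ∑ w ∈ G.neighborFinset u, x w = lam * x u := by
    intro u
    simpa using congrFun heig u
  -- partition of the vertex set
  have hcover : ∀ f : V → ℝ,
      ∑ w, f w = f ustar + ((∑ w ∈ Uf, f w) + ∑ w ∈ Wf, f w) := by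
    intro f
    have hsplit : (Finset.univ : Finset V) = insert ustar Uf ∪ Wf := by
      rw [hWfdef, Finset.union_sdiff_of_subset (Finset.subset_univ _)]
    rw [hsplit, Finset.sum_union (by rw [hWfdef]; exact Finset.disjoint_sdiff),
      Finset.sum_insert hsU, add_assoc]
  have hadjU : ∀ u ∈ Uf, G.Adj u ustar := by
    intro u hu
    rw [hUfdef, SimpleGraph.mem_neighborFinset] at hu
    exact hu.symm
  -- split of the neighborhood sum of u ∈ U
  have hinner : ∀ u ∈ Uf, ∑ w ∈ G.neighborFinset u, x w
      = x ustar + ((∑ w ∈ Uf, if G.Adj u w then x w else 0)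
        + ∑ w ∈ Wf, if G.Adj u w then x w else 0) := by
    intro u hu
    have h1 : ∑ w ∈ G.neighborFinset u, x w = ∑ w, if G.Adj u w then x w else 0 := by
      rw [SimpleGraph.neighborFinset_eq_filter, Finset.sum_filter]
    rw [h1, hcover, if_pos (hadjU u hu)]
  have hfilter : ∀ w : V, Uf.filter (fun u => G.Adj u w) = Uf ∩ G.neighborFinset w := by
    intro w
    ext u
    simp [Finset.mem_filter, Finset.mem_inter, SimpleGraph.mem_neighborFinset, G.adj_comm]
  have hswap : ∀ S : Finset V,
      (∑ u ∈ Uf, ∑ w ∈ S, if G.Adj u w then x w else 0) = ∑ w ∈ S, (d w : ℝ) * x w := by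
    intro S
    rw [Finset.sum_comm]
    refine Finset.sum_congr rfl fun w _ => ?_
    rw [← Finset.sum_filter, hfilter w, Finset.sum_const, nsmul_eq_mul]
  have hlamUf : ∑ u ∈ Uf, x u = lam * x ustar := by
    rw [hUfdef]; exact hx ustar
  -- the master identity
  have hE : lam * (lam * x ustar)
      = (Uf.card : ℝ) * x ustar
        + ((∑ w ∈ Uf, (d w : ℝ) * x w) + ∑ w ∈ Wf, (d w : ℝ) * x w) := by
    calc lam * (lam * x ustar) = ∑ u ∈ Uf, lam * x u := by rw [← hlamUf, Finset.mul_sum]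
      _ = ∑ u ∈ Uf, ∑ w ∈ G.neighborFinset u, x w :=
          Finset.sum_congr rfl fun u _ => (hx u).symm
      _ = ∑ u ∈ Uf, (x ustar + ((∑ w ∈ Uf, if G.Adj u w then x w else 0)
            + ∑ w ∈ Wf, if G.Adj u w then x w else 0)) := Finset.sum_congr rfl hinner
      _ = _ := by
          rw [Finset.sum_add_distrib, Finset.sum_add_distrib, Finset.sum_const,
            nsmul_eq_mul, hswap Uf, hswap Wf]
  have hkey : lam * lam * x ustar - lam * x ustar
      = (Uf.card : ℝ) * x ustar
        + ((∑ w ∈ Uf, ((d w : ℝ) - 1) * x w) + ∑ w ∈ Wf, (d w : ℝ) * x w) := by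
    have h2 : ∑ w ∈ Uf, ((d w : ℝ) - 1) * x w
        = (∑ w ∈ Uf, (d w : ℝ) * x w) - ∑ w ∈ Uf, x w := by
      rw [← Finset.sum_sub_distrib]
      exact Finset.sum_congr rfl fun w _ => by ring
    have h3 : lam * lam * x ustar - lam * x ustar
        = lam * (lam * x ustar) - ∑ u ∈ Uf, x u := by rw [hlamUf]; ring
    rw [h3, hE, h2]
    ring
  -- counting facts
  have hUsetc : Uset G ustar = ↑Uf := by rw [hUfdef]; exact Stmt5Aux.Uset_coe G ustar
  have hWsetc : Wset G ustar = ↑Wf := by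
    rw [hWfdef, hUfdef]; exact Stmt5Aux.Wset_coe G ustar
  have heU : eIn G (Uset G ustar) = (Stmt5Aux.restrictSub G Uf).edgeFinset.card := by
    rw [hUsetc]; exact Stmt5Aux.eIn_restrict G Uf
  have heW : eIn G (Wset G ustar) = (Stmt5Aux.restrictSub G Wf).edgeFinset.card := by
    rw [hWsetc]; exact Stmt5Aux.eIn_restrict G Wf
  have hhand : ∑ u ∈ Uf, d u = 2 * eIn G (Uset G ustar) := by
    rw [heU]; exact Stmt5Aux.handshake_restrict G Uf
  have hcross : (Stmt5Aux.crossSub G Uf Wf).edgeFinset.card = ∑ w ∈ Wf, d w :=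
    Stmt5Aux.cross_card G Uf Wf hdisjUW
  have hmcount : (m : ℝ) = (Uf.card : ℝ) + (eIn G (Uset G ustar) : ℝ)
      + (eIn G (Wset G ustar) : ℝ) + ∑ w ∈ Wf, (d w : ℝ) := by
    have h0 : m = G.edgeFinset.card := by
      rw [← hm, ← SimpleGraph.coe_edgeFinset, Set.ncard_coe_finset]
    have h2 : m = Uf.card + eIn G (Uset G ustar) + eIn G (Wset G ustar) + ∑ w ∈ Wf, d w := by
      rw [h0, Stmt5Aux.edge_partition G ustar, heU, heW, ← hcross]
    exact_mod_cast h2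
  have hhandR : ∑ u ∈ Uf, (d u : ℝ) = 2 * (eIn G (Uset G ustar) : ℝ) := by
    exact_mod_cast hhand
  have hUPc : ((Uplusset G ustar).ncard : ℝ) = (UP.card : ℝ) := by
    rw [Stmt5Aux.Uplus_card G ustar]
  have hdj : (dIn G (Uset G ustar) vj : ℝ) = (d vj : ℝ) := by
    rw [Stmt5Aux.dIn_eq G ustar vj]
  -- the analytic bound from hlam
  have hml2 : (m : ℝ) - 2 < lam * lam - lam := by
    set s := Real.sqrt (4 * (m : ℝ) - 7) with hs
    have hs0 : 0 ≤ s := Real.sqrt_nonneg _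
    have h14 : ((1 + s) / 2) ^ 2 - (1 + s) / 2 ≥ (m : ℝ) - 2 := by
      rcases le_or_gt 0 (4 * (m : ℝ) - 7) with h | h
      · have hsq : s ^ 2 = 4 * (m : ℝ) - 7 := Real.sq_sqrt h
        nlinarith [hsq]
      · have hz : s = 0 := by rw [hs]; exact Real.sqrt_eq_zero'.mpr h.le
        rw [hz]
        nlinarith [h]
    have hpos2 : 0 < (lam - (1 + s) / 2) * (lam + (1 + s) / 2 - 1) :=
      mul_pos (by linarith [hlam]) (by linarith [hlam])
    nlinarith [h14, hpos2]
  -- generic pieces of the estimates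
  have hdpos : ∀ w ∈ UP, 1 ≤ (d w : ℝ) := by
    intro w hw
    have h := (Finset.mem_filter.mp hw).2
    exact_mod_cast Nat.one_le_iff_ne_zero.mpr h
  have hUPsum : ∑ w ∈ UP, (d w : ℝ) = ∑ w ∈ Uf, (d w : ℝ) := by
    rw [hUPdef, ← Finset.sum_filter_add_sum_filter_not Uf (fun u => d u ≠ 0)
      (fun u => (d u : ℝ))]
    have hz : ∑ w ∈ Uf.filter (fun u => ¬ d u ≠ 0), (d w : ℝ) = 0 :=
      Finset.sum_eq_zero fun w hw => by
        have h := (Finset.mem_filter.mp hw).2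
        push_neg at h
        simp [h]
    rw [hz, add_zero]
  have hU0 : ∑ w ∈ Uf.filter (fun u => ¬ d u ≠ 0), ((d w : ℝ) - 1) * x w ≤ 0 :=
    Finset.sum_nonpos fun w hw => by
      have h0 := (Finset.mem_filter.mp hw).2
      push_neg at h0
      have hxw := (hpos w).le
      rw [h0]
      push_cast
      nlinarith [hxw]
  have hsplitUP : ∀ f : V → ℝ,
      ∑ w ∈ Uf, f w = ∑ w ∈ UP, f w + ∑ w ∈ Uf.filter (fun u => ¬ d u ≠ 0), f w := by
    intro f
    rw [hUPdef]
    exact (Finset.sum_filter_add_sum_filter_not Uf _ f).symm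
  have hb4 : ∑ w ∈ UP, ((d w : ℝ) - 1) = ∑ w ∈ Uf, (d w : ℝ) - UP.card := by
    rw [Finset.sum_sub_distrib, hUPsum, Finset.sum_const, nsmul_eq_mul, mul_one]
  constructor
  · -- case vj ∈ W
    intro hvjW
    have hvjWf : vj ∈ Wf := by
      rw [hWsetc] at hvjW
      exact_mod_cast hvjW
    have hSU : ∑ w ∈ Uf, ((d w : ℝ) - 1) * x w
        ≤ (∑ w ∈ Uf, (d w : ℝ) - UP.card) * x ustar := by
      rw [hsplitUP]
      have h1 : ∑ w ∈ UP, ((d w : ℝ) - 1) * x w ≤ ∑ w ∈ UP, ((d w : ℝ) - 1) * x ustar :=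
        Finset.sum_le_sum fun w hw =>
          mul_le_mul_of_nonneg_left (hmaxx w) (by linarith [hdpos w hw])
      have h2 : ∑ w ∈ UP, ((d w : ℝ) - 1) * x ustar
          = (∑ w ∈ Uf, (d w : ℝ) - UP.card) * x ustar := by
        rw [← Finset.sum_mul, hb4]
      linarith [hU0]
    have hSW : ∑ w ∈ Wf, (d w : ℝ) * x w
        ≤ (∑ w ∈ Wf, (d w : ℝ) - α * d vj) * x ustar := by
      rw [← Finset.add_sum_erase _ _ hvjWf]
      have hb1 : (d vj : ℝ) * x vj ≤ (d vj : ℝ) * ((1 - α) * x ustar) :=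
        mul_le_mul_of_nonneg_left hvj.le (Nat.cast_nonneg _)
      have hb2 : ∑ w ∈ Wf.erase vj, (d w : ℝ) * x w
          ≤ ∑ w ∈ Wf.erase vj, (d w : ℝ) * x ustar :=
        Finset.sum_le_sum fun w _ => mul_le_mul_of_nonneg_left (hmaxx w) (Nat.cast_nonneg _)
      have hb3 : ∑ w ∈ Wf.erase vj, (d w : ℝ) * x ustar
          = (∑ w ∈ Wf, (d w : ℝ) - d vj) * x ustar := by
        have hsc : ∑ w ∈ Wf.erase vj, (d w : ℝ) = ∑ w ∈ Wf, (d w : ℝ) - d vj := by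
          have h : (d vj : ℝ) + ∑ w ∈ Wf.erase vj, (d w : ℝ) = ∑ w ∈ Wf, (d w : ℝ) :=
            Finset.add_sum_erase Wf (fun w => (d w : ℝ)) hvjWf
          linarith
        rw [← Finset.sum_mul, hsc]
      have hring : (d vj : ℝ) * ((1 - α) * x ustar)
          + (∑ w ∈ Wf, (d w : ℝ) - d vj) * x ustar
          = (∑ w ∈ Wf, (d w : ℝ) - α * d vj) * x ustar := by ring
      linarith [hb1, hb2, hb3, hring]
    have hle : lam * lam - lam ≤ (Uf.card : ℝ) + (∑ w ∈ Uf, (d w : ℝ) - UP.card)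
        + (∑ w ∈ Wf, (d w : ℝ) - α * d vj) := by
      refine le_of_mul_le_mul_right ?_ hxpos
      calc (lam * lam - lam) * x ustar = lam * lam * x ustar - lam * x ustar := by ring
        _ ≤ (Uf.card : ℝ) * x ustar + ((∑ w ∈ Uf, (d w : ℝ) - UP.card) * x ustar
            + (∑ w ∈ Wf, (d w : ℝ) - α * d vj) * x ustar) := by
              rw [hkey]; linarith [hSU, hSW]
        _ = _ := by ring
    rw [hUPc, hdj]
    linarith [hml2, hle, hmcount, hhandR]
  · -- case vj ∈ U₊
    intro hvjU
    obtain ⟨hvjUf', hvjd⟩ := (Stmt5Aux.mem_Uplus_iff G ustar vj).mp hvjU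
    have hvjUP : vj ∈ UP := by
      rw [hUPdef]
      refine Finset.mem_filter.mpr ⟨by rw [hUfdef]; exact hvjUf', ?_⟩
      simpa [hddef, hUfdef] using hvjd
    have hdvj1 : 1 ≤ (d vj : ℝ) := hdpos vj hvjUP
    have hSU : ∑ w ∈ Uf, ((d w : ℝ) - 1) * x w
        ≤ (∑ w ∈ Uf, (d w : ℝ) - UP.card - α * ((d vj : ℝ) - 1)) * x ustar := by
      rw [hsplitUP]
      have e1 : ∑ w ∈ UP, ((d w : ℝ) - 1) * x w
          = ((d vj : ℝ) - 1) * x vj + ∑ w ∈ UP.erase vj, ((d w : ℝ) - 1) * x w :=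
        (Finset.add_sum_erase UP _ hvjUP).symm
      have hb1 : ((d vj : ℝ) - 1) * x vj ≤ ((d vj : ℝ) - 1) * ((1 - α) * x ustar) :=
        mul_le_mul_of_nonneg_left hvj.le (by linarith)
      have hb2 : ∑ w ∈ UP.erase vj, ((d w : ℝ) - 1) * x w
          ≤ ∑ w ∈ UP.erase vj, ((d w : ℝ) - 1) * x ustar :=
        Finset.sum_le_sum fun w hw => mul_le_mul_of_nonneg_left (hmaxx w)
          (by linarith [hdpos w (Finset.mem_of_mem_erase hw)])
      have hb3 : ∑ w ∈ UP.erase vj, ((d w : ℝ) - 1) * x ustar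
          = (∑ w ∈ Uf, (d w : ℝ) - UP.card) * x ustar - ((d vj : ℝ) - 1) * x ustar := by
        have h : ((d vj : ℝ) - 1) * x ustar
            + ∑ w ∈ UP.erase vj, ((d w : ℝ) - 1) * x ustar
            = ∑ w ∈ UP, ((d w : ℝ) - 1) * x ustar :=
          Finset.add_sum_erase UP (fun w => ((d w : ℝ) - 1) * x ustar) hvjUP
        have h2 : ∑ w ∈ UP, ((d w : ℝ) - 1) * x ustar
            = (∑ w ∈ Uf, (d w : ℝ) - UP.card) * x ustar := by
          rw [← Finset.sum_mul, hb4]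
        linarith
      have hring : ((d vj : ℝ) - 1) * ((1 - α) * x ustar)
          + ((∑ w ∈ Uf, (d w : ℝ) - UP.card) * x ustar - ((d vj : ℝ) - 1) * x ustar)
          = (∑ w ∈ Uf, (d w : ℝ) - UP.card - α * ((d vj : ℝ) - 1)) * x ustar := by ring
      linarith [hU0, e1, hb1, hb2, hb3, hring]
    have hSW : ∑ w ∈ Wf, (d w : ℝ) * x w ≤ (∑ w ∈ Wf, (d w : ℝ)) * x ustar := by
      calc ∑ w ∈ Wf, (d w : ℝ) * x w ≤ ∑ w ∈ Wf, (d w : ℝ) * x ustar :=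
            Finset.sum_le_sum fun w _ =>
              mul_le_mul_of_nonneg_left (hmaxx w) (Nat.cast_nonneg _)
        _ = _ := by rw [Finset.sum_mul]
    have hle : lam * lam - lam ≤ (Uf.card : ℝ)
        + (∑ w ∈ Uf, (d w : ℝ) - UP.card - α * ((d vj : ℝ) - 1))
        + ∑ w ∈ Wf, (d w : ℝ) := by
      refine le_of_mul_le_mul_right ?_ hxpos
      calc (lam * lam - lam) * x ustar = lam * lam * x ustar - lam * x ustar := by ring
        _ ≤ (Uf.card : ℝ) * x ustar
            + ((∑ w ∈ Uf, (d w : ℝ) - UP.card - α * ((d vj : ℝ) - 1)) * x ustar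
            + (∑ w ∈ Wf, (d w : ℝ)) * x ustar) := by
              rw [hkey]; linarith [hSU, hSW]
        _ = _ := by ring
    rw [hUPc, hdj]
    linarith [hml2, hle, hmcount, hhandR]
end

section
/- Let m be an odd integer with m ≥ 58 and let Ĝ be a connected graph attaining the maximum spectral radius among all graphs in 𝒢(m,H(4,3)) other than K_2 ∨ ((m−1)/2)K_1. Let x be the Perron vector of Ĝ, u* a vertex of maximum entry, U = N(u*), and U_+ = {u∈U : u has at least one neighbor in U}. If λ(Ĝ) > (1 + √(4m−7))/2, then the induced subgraph Ĝ[U_+] contains at least 7 edges. -/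
open Finset

/-- For odd `m ≥ 58`, if `Ĝ` is a connected spectral-extremal graph in
`𝒢(m,H(4,3)) \ {K₂ ∨ ((m-1)/2)K₁}` and `λ(Ĝ) > (1 + √(4m-7))/2`, then `Ĝ[U₊]` has at
least 7 edges. -/
theorem stmt_6 {V : Type*} [Fintype V] [DecidableEq V] (m : ℕ) (hm : 58 ≤ m) (hodd : Odd m)
    (Ghat : SimpleGraph V) [DecidableRel Ghat.Adj] (hconn : Ghat.Connected)
    (hext : isExtremal m Ghat)
    (x : V → ℝ) (hpos : ∀ v, 0 < x v) (hunit : ∑ v : V, x v ^ 2 = 1)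
    (heig : (SimpleGraph.adjMatrix ℝ Ghat).mulVec x = specRad Ghat • x)
    (ustar : V) (hmaxx : ∀ v, x v ≤ x ustar)
    (hlam : (1 + Real.sqrt (4 * (m : ℝ) - 7)) / 2 < specRad Ghat) :
    7 ≤ eIn Ghat (Uplusset Ghat ustar) := by
  classical
  set lam := specRad Ghat with hlamdef
  -- eigen-equation
  have key : ∀ v, ∑ w ∈ Ghat.neighborFinset v, x w = lam * x v := by
    intro v
    have h := congrFun heig v
    rw [SimpleGraph.adjMatrix_mulVec_apply] at h
    simpa using h
  set U : Finset V := Ghat.neighborFinset ustar with hU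
  have hm_card : Ghat.edgeFinset.card = m := by
    have h := hext.1.2.1
    rwa [← Ghat.coe_edgeFinset, Set.ncard_coe_finset] at h
  set eU : ℕ := (Ghat.edgeFinset.filter (fun e => ∀ v ∈ e, v ∈ U)).card with heU
  -- counting: sum of degrees over U ≤ m + eU
  have hcount : ∑ v ∈ U, Ghat.degree v ≤ m + eU := by
    have h1 : ∀ v : V, Ghat.degree v = ∑ e ∈ Ghat.edgeFinset, if v ∈ e then 1 else 0 := by
      intro v
      rw [← SimpleGraph.card_incidenceFinset_eq_degree,
        SimpleGraph.incidenceFinset_eq_filter, Finset.card_filter]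
    calc ∑ v ∈ U, Ghat.degree v
        = ∑ v ∈ U, ∑ e ∈ Ghat.edgeFinset, if v ∈ e then 1 else 0 := by
          exact Finset.sum_congr rfl fun v _ => h1 v
      _ = ∑ e ∈ Ghat.edgeFinset, ∑ v ∈ U, if v ∈ e then 1 else 0 := Finset.sum_comm
      _ = ∑ e ∈ Ghat.edgeFinset, (U.filter (fun v => v ∈ e)).card := by
          exact Finset.sum_congr rfl fun e _ => (Finset.card_filter _ _).symm
      _ ≤ ∑ e ∈ Ghat.edgeFinset, (1 + if (∀ v ∈ e, v ∈ U) then 1 else 0) := by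
          apply Finset.sum_le_sum
          intro e he
          induction e using Sym2.ind with
          | _ a b =>
            have hab : Ghat.Adj a b := by
              rwa [SimpleGraph.mem_edgeFinset, SimpleGraph.mem_edgeSet] at he
            by_cases hall : ∀ v ∈ s(a, b), v ∈ U
            · rw [if_pos hall]
              calc (U.filter (fun v => v ∈ s(a, b))).card
                  ≤ ({a, b} : Finset V).card := by
                    apply Finset.card_le_card
                    intro v hv
                    have := (Finset.mem_filter.1 hv).2
                    rw [Sym2.mem_iff] at this
                    simpa [Finset.mem_insert] using this
                _ ≤ 2 := by
                    apply le_trans (Finset.card_insert_le _ _)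
                    simp
            · rw [if_neg hall]
              push_neg at hall
              obtain ⟨v, hv, hvU⟩ := hall
              rw [Sym2.mem_iff] at hv
              rcases hv with rfl | rfl
              · -- a = v ∉ U
                calc (U.filter (fun w => w ∈ s(v, b))).card
                    ≤ ({b} : Finset V).card := by
                      apply Finset.card_le_card
                      intro w hw
                      obtain ⟨hwU, hwmem⟩ := Finset.mem_filter.1 hw
                      rw [Sym2.mem_iff] at hwmem
                      rcases hwmem with rfl | rfl
                      · exact absurd hwU hvU
                      · simp
                  _ = 1 := Finset.card_singleton _
              · calc (U.filter (fun w => w ∈ s(a, v))).card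
                    ≤ ({a} : Finset V).card := by
                      apply Finset.card_le_card
                      intro w hw
                      obtain ⟨hwU, hwmem⟩ := Finset.mem_filter.1 hw
                      rw [Sym2.mem_iff] at hwmem
                      rcases hwmem with rfl | rfl
                      · simp
                      · exact absurd hwU hvU
                  _ = 1 := Finset.card_singleton _
      _ = Ghat.edgeFinset.card + eU := by
          rw [Finset.sum_add_distrib, Finset.sum_const, smul_eq_mul, mul_one, heU,
            Finset.card_filter]
      _ = m + eU := by rw [hm_card]
  -- upper bound: lam^2 ≤ m + eU
  have hx0 : 0 < x ustar := hpos ustar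
  have step2 : lam * lam * x ustar ≤ ((m + eU : ℕ) : ℝ) * x ustar := by
    have e1 : lam * lam * x ustar = ∑ v ∈ U, lam * x v := by
      rw [mul_assoc, ← key ustar, ← hU, Finset.mul_sum]
    have e2 : ∑ v ∈ U, lam * x v = ∑ v ∈ U, ∑ w ∈ Ghat.neighborFinset v, x w := by
      exact Finset.sum_congr rfl fun v _ => (key v).symm
    have e3 : ∑ v ∈ U, ∑ w ∈ Ghat.neighborFinset v, x w
        ≤ ∑ v ∈ U, (Ghat.degree v : ℝ) * x ustar := by
      apply Finset.sum_le_sum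
      intro v _
      have := Finset.sum_le_card_nsmul (Ghat.neighborFinset v) x (x ustar)
        (fun w _ => hmaxx w)
      rwa [nsmul_eq_mul, SimpleGraph.card_neighborFinset_eq_degree] at this
    have e4 : ∑ v ∈ U, (Ghat.degree v : ℝ) * x ustar
        ≤ ((m + eU : ℕ) : ℝ) * x ustar := by
      rw [← Finset.sum_mul]
      apply mul_le_mul_of_nonneg_right _ hx0.le
      exact_mod_cast hcount
    rw [e1]
    exact (e2.le.trans e3).trans e4
  have hub : lam * lam ≤ (m : ℝ) + eU := by
    have := le_of_mul_le_mul_right step2 hx0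
    push_cast at this
    linarith
  -- lower bound: lam^2 > m + 6
  have hm' : (58 : ℝ) ≤ (m : ℝ) := by exact_mod_cast hm
  have hnn : (0 : ℝ) ≤ 4 * (m : ℝ) - 7 := by linarith
  have hsq : Real.sqrt (4 * (m : ℝ) - 7) ^ 2 = 4 * (m : ℝ) - 7 := Real.sq_sqrt hnn
  have hs15 : (15 : ℝ) ≤ Real.sqrt (4 * (m : ℝ) - 7) := by
    have h225 : Real.sqrt 225 ≤ Real.sqrt (4 * (m : ℝ) - 7) :=
      Real.sqrt_le_sqrt (by linarith)
    have : Real.sqrt 225 = 15 := by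
      rw [show (225 : ℝ) = 15 ^ 2 by norm_num, Real.sqrt_sq (by norm_num)]
    linarith
  have hlam8 : (8 : ℝ) < lam := by
    have : (8 : ℝ) ≤ (1 + Real.sqrt (4 * (m : ℝ) - 7)) / 2 := by linarith
    linarith [hlam]
  have hlb : (m : ℝ) + 6 < lam * lam := by
    nlinarith [hlam, hsq, hs15, hlam8,
      mul_pos (sub_pos.2 hlam) (show (0:ℝ) < lam + (1 + Real.sqrt (4 * (m:ℝ) - 7)) / 2 - 1 by nlinarith)]
  -- hence 7 ≤ eU
  have heU7 : 7 ≤ eU := by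
    have : (6 : ℝ) < (eU : ℝ) := by linarith
    exact_mod_cast this
  -- identify eIn with eU
  have hsub : ∀ a b : V, Ghat.Adj a b → a ∈ Ghat.neighborSet ustar →
      b ∈ Ghat.neighborSet ustar → a ∈ Uplusset Ghat ustar := by
    intro a b hab ha hb
    refine ⟨ha, ?_⟩
    have hne : (Ghat.neighborSet ustar ∩ Ghat.neighborSet a).Nonempty := ⟨b, hb, hab⟩
    have := (Set.ncard_pos (Set.toFinite _)).2 hne
    unfold dIn
    omega
  have hseteq : {e ∈ Ghat.edgeSet | ∀ v ∈ e, v ∈ Uplusset Ghat ustar}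
      = {e ∈ Ghat.edgeSet | ∀ v ∈ e, v ∈ U} := by
    ext e
    induction e using Sym2.ind with
    | _ a b =>
      simp only [Set.mem_setOf_eq, Sym2.mem_iff]
      constructor
      · rintro ⟨he, h⟩
        refine ⟨he, fun v hv => ?_⟩
        have := (h v hv).1
        rwa [hU, SimpleGraph.mem_neighborFinset]
      · rintro ⟨he, h⟩
        refine ⟨he, fun v hv => ?_⟩
        have hab : Ghat.Adj a b := he
        have haU : a ∈ Ghat.neighborSet ustar := by
          have := h a (Or.inl rfl); rwa [hU, SimpleGraph.mem_neighborFinset] at this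
        have hbU : b ∈ Ghat.neighborSet ustar := by
          have := h b (Or.inr rfl); rwa [hU, SimpleGraph.mem_neighborFinset] at this
        rcases hv with rfl | rfl
        · exact hsub v b hab haU hbU
        · exact hsub v a hab.symm hbU haU
  have heIn : eIn Ghat (Uplusset Ghat ustar) = eU := by
    rw [eIn, hseteq]
    have : {e ∈ Ghat.edgeSet | ∀ v ∈ e, v ∈ U}
        = ↑(Ghat.edgeFinset.filter (fun e => ∀ v ∈ e, v ∈ U)) := by
      ext e
      simp [Set.mem_setOf_eq, SimpleGraph.mem_edgeFinset]
    rw [this, Set.ncard_coe_finset]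
  omega
end
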